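/- arXiv:math/0506530 — 15 statements merged into one kernel-verified Lean document; each statement's English description precedes it below -/
import Mathlib

section
/- Let R be a commutative integral domain and G a linearly ordered additive abelian group (a linear order compatible with addition). Then an element f of the group algebra AddMonoidAlgebra R G is a unit if and only if f = single g r for some g ∈ G and some unit r of R; that is, the units are exactly the monomials r·x^g with r invertible in R. -/
open Finset AddMonoidAlgebra

section aux

variable {G : Type*} [AddCommGroup G] [LinearOrder G]
  [CovariantClass G G (· + ·) (· < ·)]

private lemma uniqueAdd_max (A B : Finset G) (hA : A.Nonempty) (hB : B.Nonempty) :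
    UniqueAdd A B (A.max' hA) (B.max' hB) := by
  haveI : AddLeftMono G := covariantClass_le_of_lt G G (· + ·)
  intro a b ha hb hab
  have h1 : a ≤ A.max' hA := le_max' _ _ ha
  have h2 : b ≤ B.max' hB := le_max' _ _ hb
  constructor
  · by_contra h
    have : a + b < A.max' hA + B.max' hB := by
      calc a + b < a + B.max' hB + (A.max' hA - a) := by
            have : (0:G) < A.max' hA - a := by
              rw [sub_pos]; exact lt_of_le_of_ne h1 h
            calc a + b ≤ a + B.max' hB := by
                  exact add_le_add_right h2 a
              _ < a + B.max' hB + (A.max' hA - a) := by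
                  nth_rewrite 1 [← add_zero (a + B.max' hB)]
                  rw [add_comm (a + B.max' hB) 0, add_comm (a + B.max' hB) _]
                  exact add_lt_add_left this _
        _ = A.max' hA + B.max' hB := by abel
    exact absurd hab this.ne
  · by_contra h
    have : a + b < A.max' hA + B.max' hB := by
      calc a + b < a + B.max' hB := add_lt_add_right (lt_of_le_of_ne h2 h) a
        _ = B.max' hB + a := add_comm _ _
        _ ≤ B.max' hB + A.max' hA := add_le_add_right h1 _
        _ = A.max' hA + B.max' hB := add_comm _ _
    exact absurd hab this.ne

private lemma uniqueAdd_min (A B : Finset G) (hA : A.Nonempty) (hB : B.Nonempty) :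
    UniqueAdd A B (A.min' hA) (B.min' hB) := by
  haveI : AddLeftMono G := covariantClass_le_of_lt G G (· + ·)
  intro a b ha hb hab
  have h1 : A.min' hA ≤ a := min'_le _ _ ha
  have h2 : B.min' hB ≤ b := min'_le _ _ hb
  constructor
  · by_contra h
    have : A.min' hA + B.min' hB < a + b := by
      calc A.min' hA + B.min' hB ≤ A.min' hA + b := add_le_add_right h2 _
        _ = b + A.min' hA := add_comm _ _
        _ < b + a := add_lt_add_right (lt_of_le_of_ne h1 (Ne.symm h)) b
        _ = a + b := add_comm _ _
    exact absurd hab this.ne'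
  · by_contra h
    have : A.min' hA + B.min' hB < a + b := by
      calc A.min' hA + B.min' hB ≤ a + B.min' hB := by
            rw [add_comm (A.min' hA) _, add_comm a _]
            exact add_le_add_right h1 _
        _ < a + b := add_lt_add_right (lt_of_le_of_ne h2 (Ne.symm h)) a
    exact absurd hab this.ne'

end aux

/-- If `R` is a commutative integral domain and `G` is a linearly
ordered additive abelian group, then the units of `AddMonoidAlgebra R G` are
exactly the monomials `single g r` with `r` a unit of `R`. -/
theorem stmt_3 (R G : Type*) [CommRing R] [IsDomain R] [AddCommGroup G]
    [LinearOrder G] [CovariantClass G G (· + ·) (· < ·)]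
    (f : AddMonoidAlgebra R G) :
    IsUnit f ↔ ∃ (g : G) (r : Rˣ), f = AddMonoidAlgebra.single g (r : R) := by
  haveI : AddLeftMono G := covariantClass_le_of_lt G G (· + ·)
  constructor
  · rintro ⟨u, rfl⟩
    set f : AddMonoidAlgebra R G := (u : AddMonoidAlgebra R G) with hf
    set h : AddMonoidAlgebra R G := ((u⁻¹ : _) : AddMonoidAlgebra R G) with hh
    have hfh : f * h = 1 := by rw [hf, hh, ← Units.val_mul, mul_inv_cancel, Units.val_one]
    have hne1 : (1 : AddMonoidAlgebra R G) ≠ 0 := one_ne_zero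
    have hfne : f ≠ 0 := by rintro h0; rw [h0, zero_mul] at hfh; exact hne1 hfh.symm
    have hhne : h ≠ 0 := by rintro h0; rw [h0, mul_zero] at hfh; exact hne1 hfh.symm
    have hA : f.coeff.support.Nonempty := Finsupp.support_nonempty_iff.mpr (mt AddMonoidAlgebra.coeff_eq_zero.mp hfne)
    have hB : h.coeff.support.Nonempty := Finsupp.support_nonempty_iff.mpr (mt AddMonoidAlgebra.coeff_eq_zero.mp hhne)
    have hone : ∀ x : G, (1 : AddMonoidAlgebra R G).coeff x = if x = 0 then 1 else 0 := by
      intro x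
      rw [AddMonoidAlgebra.one_def, AddMonoidAlgebra.coeff_single, Finsupp.single_apply]
      simp [eq_comm]
    -- max
    have hmax := AddMonoidAlgebra.coeff_mul_add_of_uniqueAdd
      (uniqueAdd_max f.coeff.support h.coeff.support hA hB)
    have hmin := AddMonoidAlgebra.coeff_mul_add_of_uniqueAdd
      (uniqueAdd_min f.coeff.support h.coeff.support hA hB)
    rw [hfh, hone] at hmax hmin
    have hfa : f.coeff (f.coeff.support.max' hA) ≠ 0 := Finsupp.mem_support_iff.mp (max'_mem _ _)
    have hhb : h.coeff (h.coeff.support.max' hB) ≠ 0 := Finsupp.mem_support_iff.mp (max'_mem _ _)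
    have hfa' : f.coeff (f.coeff.support.min' hA) ≠ 0 := Finsupp.mem_support_iff.mp (min'_mem _ _)
    have hhb' : h.coeff (h.coeff.support.min' hB) ≠ 0 := Finsupp.mem_support_iff.mp (min'_mem _ _)
    have hmax0 : f.coeff.support.max' hA + h.coeff.support.max' hB = 0 := by
      by_contra hc
      rw [if_neg hc] at hmax
      exact mul_ne_zero hfa hhb hmax.symm
    have hmin0 : f.coeff.support.min' hA + h.coeff.support.min' hB = 0 := by
      by_contra hc
      rw [if_neg hc] at hmin
      exact mul_ne_zero hfa' hhb' hmin.symm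
    -- min = max
    have hle1 : f.coeff.support.min' hA ≤ f.coeff.support.max' hA := min'_le _ _ (max'_mem _ _)
    have hle2 : h.coeff.support.min' hB ≤ h.coeff.support.max' hB := min'_le _ _ (max'_mem _ _)
    have heq : f.coeff.support.min' hA = f.coeff.support.max' hA := by
      by_contra hc
      have : f.coeff.support.min' hA + h.coeff.support.min' hB < f.coeff.support.max' hA + h.coeff.support.max' hB := by
        calc f.coeff.support.min' hA + h.coeff.support.min' hB
            ≤ f.coeff.support.min' hA + h.coeff.support.max' hB := add_le_add_right hle2 _
          _ = h.coeff.support.max' hB + f.coeff.support.min' hA := add_comm _ _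
          _ < h.coeff.support.max' hB + f.coeff.support.max' hA :=
              add_lt_add_right (lt_of_le_of_ne hle1 hc) _
          _ = f.coeff.support.max' hA + h.coeff.support.max' hB := add_comm _ _
      rw [hmin0, hmax0] at this
      exact lt_irrefl _ this
    -- support is a singleton
    set g : G := f.coeff.support.max' hA with hg
    have hsupp : f.coeff.support = {g} := by
      apply Finset.eq_singleton_iff_unique_mem.mpr
      refine ⟨max'_mem _ _, fun x hx => ?_⟩
      exact le_antisymm (le_max' _ _ hx) (heq ▸ min'_le _ _ hx)
    have hfsingle : f = AddMonoidAlgebra.single g (f.coeff g) := by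
      apply AddMonoidAlgebra.coeff_injective
      ext x
      rw [AddMonoidAlgebra.coeff_single, Finsupp.single_apply]
      by_cases hx : g = x
      · rw [if_pos hx, hx]
      · rw [if_neg hx]
        by_contra hc
        exact hx ((Finset.eq_singleton_iff_unique_mem.mp hsupp).2 x
          (Finsupp.mem_support_iff.mpr hc)).symm
    have hunit : IsUnit (f.coeff g) := by
      rw [if_pos hmax0] at hmax
      exact IsUnit.of_mul_eq_one _ hmax.symm
    obtain ⟨r, hr⟩ := hunit
    exact ⟨g, r, by rw [hfsingle, hr]⟩
  · rintro ⟨g, r, rfl⟩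
    refine IsUnit.of_mul_eq_one (AddMonoidAlgebra.single (-g) ((r⁻¹ : Rˣ) : R)) ?_
    rw [AddMonoidAlgebra.single_mul_single, add_neg_cancel, ← Units.val_mul, mul_inv_cancel]
    rfl
end

section
/- Let R be a commutative integral domain and G a linearly ordered additive abelian group. Suppose there exist a natural number n ≥ 2 and a nonzero element s ∈ G such that for every k ∈ ℕ there is t ∈ G with s = n^k • t (i.e., s lies in G_n = ⋂_k n^k G and s ≠ 0). Then the group algebra AddMonoidAlgebra R G is not a Noetherian ring. -/
section Aux

variable {R G : Type*} [CommRing R] [IsDomain R] [AddCommGroup G]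

/-- Key non-membership: if `t` is not a multiple of `u`, then `single t 1 - 1`
is not in the ideal generated by `single u 1 - 1`. -/
theorem stmt4_aux (t u : G) (ht : t ∉ AddSubgroup.zmultiples u) :
    (AddMonoidAlgebra.single t 1 - 1 : AddMonoidAlgebra R G) ∉
      Ideal.span {(AddMonoidAlgebra.single u 1 - 1 : AddMonoidAlgebra R G)} := by
  intro hmem
  rw [Ideal.mem_span_singleton] at hmem
  set H := AddSubgroup.zmultiples u
  let φ : AddMonoidAlgebra R G →+* AddMonoidAlgebra R (G ⧸ H) :=
    AddMonoidAlgebra.mapDomainRingHom R (QuotientAddGroup.mk' H)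
  have hφs : ∀ g : G, φ (AddMonoidAlgebra.single g 1) =
      AddMonoidAlgebra.single (QuotientAddGroup.mk' H g) 1 := by
    intro g
    simp [φ, AddMonoidAlgebra.mapDomainRingHom, Finsupp.mapDomain_single]
  have hu0 : (QuotientAddGroup.mk' H u : G ⧸ H) = 0 := by
    rw [QuotientAddGroup.mk'_apply, QuotientAddGroup.eq_zero_iff]
    exact AddSubgroup.mem_zmultiples u
  have h0 : φ (AddMonoidAlgebra.single u 1 - 1) = 0 := by
    rw [map_sub, map_one, hφs, hu0]
    simp [AddMonoidAlgebra.one_def]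
  obtain ⟨c, hc⟩ := hmem
  have := congrArg φ hc
  rw [map_sub, map_one, hφs, map_mul, h0, zero_mul, sub_eq_zero] at this
  rw [AddMonoidAlgebra.one_def, AddMonoidAlgebra.single_inj] at this
  rcases this with ⟨h1, -⟩ | ⟨h1, -⟩
  · rw [QuotientAddGroup.mk'_apply, QuotientAddGroup.eq_zero_iff] at h1
    exact ht h1
  · exact one_ne_zero h1

end Aux

/-- Let `R` be a commutative integral domain and `G` a linearly
ordered additive abelian group. If there are `n ≥ 2` and a nonzero `s ∈ G`
with `s ∈ ⋂_k n^k G` (i.e. for every `k` there is `t` with `s = n^k • t`),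
then `AddMonoidAlgebra R G` is not a Noetherian ring. -/
theorem stmt_4 (R G : Type*) [CommRing R] [IsDomain R] [AddCommGroup G]
    [LinearOrder G] [CovariantClass G G (· + ·) (· < ·)]
    (n : ℕ) (hn : 2 ≤ n) (s : G) (hs : s ≠ 0)
    (hdiv : ∀ k : ℕ, ∃ t : G, s = n ^ k • t) :
    ¬ IsNoetherianRing (AddMonoidAlgebra R G) := by
  intro hN
  -- G is a linearly ordered additive commutative group
  haveI : CovariantClass G G (· + ·) (· ≤ ·) := covariantClass_le_of_lt G G (· + ·)
  letI : IsOrderedAddMonoid G :=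
    { add_le_add_left := fun a b h c => add_le_add_left h c }
  -- torsion-freeness
  have tf : ∀ (c : ℤ), c ≠ 0 → ∀ a : G, c • a = 0 → a = 0 := by
    intro c hc a ha
    exact zsmul_right_injective hc (by simpa using ha)
  choose t ht using hdiv
  -- t k = n • t (k+1)
  have hstep : ∀ k, t k = n • t (k + 1) := by
    intro k
    have h1 : (n ^ k : ℕ) • t k = (n ^ k : ℕ) • (n • t (k + 1)) := by
      rw [← ht k, ← mul_smul, ← pow_succ]
      exact ht (k + 1)
    have h2 : ((n ^ k : ℕ) : ℤ) • t k = ((n ^ k : ℕ) : ℤ) • (n • t (k + 1)) := by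
      rw [natCast_zsmul, natCast_zsmul]; exact h1
    have hne : ((n ^ k : ℕ) : ℤ) ≠ 0 := by positivity
    exact zsmul_right_injective hne h2
  have htne : ∀ k, t k ≠ 0 := by
    intro k h0
    exact hs (by rw [ht k, h0, smul_zero])
  -- t (k+1) is not a multiple of t k
  have hnm : ∀ k, t (k + 1) ∉ AddSubgroup.zmultiples (t k) := by
    intro k hmem
    rw [AddSubgroup.mem_zmultiples_iff] at hmem
    obtain ⟨m, hm⟩ := hmem
    rw [hstep k, ← natCast_zsmul, smul_smul] at hm
    have h0 : (m * n - 1 : ℤ) • t (k + 1) = 0 := by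
      rw [sub_smul, one_smul, hm, sub_self]
    have hmn : (m * n - 1 : ℤ) ≠ 0 := by
      intro h
      have : (n : ℤ) ∣ 1 := ⟨m, by linarith⟩
      have := Int.le_of_dvd one_pos this
      omega
    exact htne (k + 1) (tf _ hmn _ h0)
  -- the strictly increasing chain of ideals
  let f : ℕ →o Ideal (AddMonoidAlgebra R G) :=
    ⟨fun k => Ideal.span {(AddMonoidAlgebra.single (t k) 1 - 1 : AddMonoidAlgebra R G)}, ?_⟩
  swap
  · apply monotone_nat_of_le_succ
    intro k
    rw [Ideal.span_le, Set.singleton_subset_iff, SetLike.mem_coe, Ideal.mem_span_singleton]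
    have : (AddMonoidAlgebra.single (t k) 1 : AddMonoidAlgebra R G) =
        (AddMonoidAlgebra.single (t (k + 1)) 1) ^ n := by
      rw [AddMonoidAlgebra.single_pow, one_pow, hstep k]
    rw [this]
    simpa using sub_dvd_pow_sub_pow (AddMonoidAlgebra.single (t (k + 1)) 1 :
      AddMonoidAlgebra R G) 1 n
  obtain ⟨N, hst⟩ := monotone_stabilizes_iff_noetherian.mpr hN f
  have hmem : (AddMonoidAlgebra.single (t (N + 1)) 1 - 1 : AddMonoidAlgebra R G) ∈ f N := by
    rw [hst (N + 1) (Nat.le_succ N)]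
    exact Ideal.subset_span rfl
  exact stmt4_aux (t (N + 1)) (t N) (hnm N) hmem
end

section
/- Let R be a commutative integral domain. Then the group algebra AddMonoidAlgebra R ℚ fails the ascending chain condition on principal ideals (it is not a WfDvdMonoid); consequently it is neither a Noetherian ring nor a unique factorization domain. -/
open Finsupp

set_option linter.unusedSectionVars false

section aux
variable {R : Type*} [CommRing R] [IsDomain R]

lemma aux_mul_apply_max (f g : AddMonoidAlgebra R ℚ) {af ag : ℚ}
    (hf : ∀ a ∈ f.coeff.support, a ≤ af) (hg : ∀ a ∈ g.coeff.support, a ≤ ag) :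
    (f * g).coeff (af + ag) = f.coeff af * g.coeff ag := by
  classical
  rw [AddMonoidAlgebra.mul_apply]
  rw [Finsupp.sum, Finset.sum_eq_single af]
  · rw [Finsupp.sum, Finset.sum_eq_single ag]
    · rw [if_pos rfl]
    · intro a' ha' hne
      exact if_neg (fun h => hne (by linarith [add_left_cancel h]))
    · intro h; rw [Finsupp.notMem_support_iff.1 h, mul_zero, if_pos rfl]
  · intro a ha hne
    refine Finset.sum_eq_zero fun a' ha' => if_neg fun h => ?_
    have h1 : a < af := (hf a ha).lt_of_ne hne
    have h2 : a' ≤ ag := hg a' ha'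
    have : a + a' < af + ag := by linarith
    exact this.ne h
  · intro h
    refine Finset.sum_eq_zero fun a' _ => ?_
    simp [Finsupp.notMem_support_iff.1 h]

lemma aux_mul_apply_min (f g : AddMonoidAlgebra R ℚ) {af ag : ℚ}
    (hf : ∀ a ∈ f.coeff.support, af ≤ a) (hg : ∀ a ∈ g.coeff.support, ag ≤ a) :
    (f * g).coeff (af + ag) = f.coeff af * g.coeff ag := by
  classical
  rw [AddMonoidAlgebra.mul_apply]
  rw [Finsupp.sum, Finset.sum_eq_single af]
  · rw [Finsupp.sum, Finset.sum_eq_single ag]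
    · rw [if_pos rfl]
    · intro a' ha' hne
      exact if_neg (fun h => hne (by linarith [add_left_cancel h]))
    · intro h; rw [Finsupp.notMem_support_iff.1 h, mul_zero, if_pos rfl]
  · intro a ha hne
    refine Finset.sum_eq_zero fun a' ha' => if_neg fun h => ?_
    have h1 : af < a := ((hf a ha).lt_of_ne (Ne.symm hne))
    have h2 : ag ≤ a' := hg a' ha'
    have : af + ag < a + a' := by linarith
    exact this.ne' h
  · intro h
    refine Finset.sum_eq_zero fun a' _ => ?_
    simp [Finsupp.notMem_support_iff.1 h]

lemma aux_not_unit {q : ℚ} (hq : 0 < q) :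
    ¬ IsUnit (AddMonoidAlgebra.single q (1:R) + 1 : AddMonoidAlgebra R ℚ) := by
  intro hu
  obtain ⟨g, hfg⟩ := isUnit_iff_exists_inv.mp hu
  set f : AddMonoidAlgebra R ℚ := AddMonoidAlgebra.single q (1:R) + 1 with hfdef
  have hone : (1 : AddMonoidAlgebra R ℚ) = AddMonoidAlgebra.single 0 1 :=
    AddMonoidAlgebra.one_def
  have hfq : f.coeff q = 1 := by
    rw [hfdef, hone, AddMonoidAlgebra.coeff_add, Finsupp.add_apply, AddMonoidAlgebra.coeff_single_apply,
      AddMonoidAlgebra.coeff_single_apply, if_pos rfl, if_neg hq.ne, add_zero]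
  have hf0 : f.coeff 0 = 1 := by
    rw [hfdef, hone, AddMonoidAlgebra.coeff_add, Finsupp.add_apply, AddMonoidAlgebra.coeff_single_apply,
      AddMonoidAlgebra.coeff_single_apply, if_neg hq.ne', if_pos rfl, zero_add]
  have hfsupp : f.coeff.support ⊆ {q, 0} := by
    rw [hfdef, hone, AddMonoidAlgebra.coeff_add]
    refine (Finsupp.support_add).trans ?_
    apply Finset.union_subset
    · exact (Finsupp.support_single_subset).trans (by simp)
    · exact (Finsupp.support_single_subset).trans (by simp)
  have hg0 : g ≠ 0 := by
    rintro rfl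
    rw [mul_zero] at hfg
    exact zero_ne_one hfg
  have hne : g.coeff.support.Nonempty := Finsupp.support_nonempty_iff.mpr (AddMonoidAlgebra.coeff_eq_zero.not.mpr hg0)
  set Mg := g.coeff.support.max' hne with hMg
  set mg := g.coeff.support.min' hne with hmg
  have hgM : g.coeff Mg ≠ 0 := Finsupp.mem_support_iff.mp (g.coeff.support.max'_mem hne)
  have hgm : g.coeff mg ≠ 0 := Finsupp.mem_support_iff.mp (g.coeff.support.min'_mem hne)
  have hfmax : ∀ a ∈ f.coeff.support, a ≤ q := by
    intro a ha
    rcases Finset.mem_insert.mp (hfsupp ha) with h | h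
    · exact h.le
    · simp only [Finset.mem_singleton] at h; rw [h]; exact hq.le
  have hfmin : ∀ a ∈ f.coeff.support, (0:ℚ) ≤ a := by
    intro a ha
    rcases Finset.mem_insert.mp (hfsupp ha) with h | h
    · rw [h]; exact hq.le
    · simp only [Finset.mem_singleton] at h; rw [h]
  -- max argument
  have h1 : (f * g).coeff (q + Mg) = g.coeff Mg := by
    rw [aux_mul_apply_max f g hfmax (fun a ha => g.coeff.support.le_max' a ha), hfq, one_mul]
  have h2 : (f * g).coeff (0 + mg) = g.coeff mg := by
    rw [aux_mul_apply_min f g hfmin (fun a ha => g.coeff.support.min'_le a ha), hf0, one_mul]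
  rw [hfg] at h1 h2
  have hMgval : q + Mg = 0 := by
    by_contra h
    rw [hone, AddMonoidAlgebra.coeff_single_apply, if_neg (fun he => h he.symm)] at h1
    exact hgM h1.symm
  have hmgval : (0:ℚ) + mg = 0 := by
    by_contra h
    rw [hone, AddMonoidAlgebra.coeff_single_apply, if_neg (fun he => h he.symm)] at h2
    exact hgm h2.symm
  have : mg ≤ Mg := g.coeff.support.min'_le _ (g.coeff.support.max'_mem hne)
  have : (0:ℚ) < 0 := by
    have hMg' : Mg = -q := by linarith
    have hmg' : mg = 0 := by linarith
    rw [hmg', hMg'] at this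
    linarith
  exact lt_irrefl _ this

lemma aux_chain (n : ℕ) :
    DvdNotUnit (AddMonoidAlgebra.single ((1/2^(n+1) : ℚ)) (1:R) - 1)
      (AddMonoidAlgebra.single ((1/2^n : ℚ)) (1:R) - 1) := by
  have hpos : ∀ m : ℕ, (0:ℚ) < 1/2^m := fun m => by positivity
  refine ⟨?_, AddMonoidAlgebra.single ((1/2^(n+1) : ℚ)) (1:R) + 1, ?_, ?_⟩
  · intro h
    have := sub_eq_zero.mp h
    rw [AddMonoidAlgebra.one_def] at this
    have := AddMonoidAlgebra.single_inj.mp this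
    rcases this with ⟨h1, -⟩ | ⟨h1, -⟩
    · exact (hpos (n+1)).ne' h1
    · exact one_ne_zero h1
  · exact aux_not_unit (hpos (n+1))
  · have key : AddMonoidAlgebra.single ((1/2^(n+1) : ℚ)) (1:R) *
        AddMonoidAlgebra.single ((1/2^(n+1) : ℚ)) (1:R) =
        AddMonoidAlgebra.single ((1/2^n : ℚ)) (1:R) := by
      rw [AddMonoidAlgebra.single_mul_single, mul_one]
      congr 1
      rw [pow_succ]
      ring
    rw [mul_comm, add_mul, one_mul, mul_sub, mul_one, key]
    ring

end aux

/-- For a commutative integral domain `R`, the group algebra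
`AddMonoidAlgebra R ℚ` fails the ascending chain condition on principal
ideals (it is not a `WfDvdMonoid`); consequently it is neither Noetherian
nor a unique factorization domain. -/
theorem stmt_5 (R : Type*) [CommRing R] [IsDomain R] :
    haveI : IsDomain (AddMonoidAlgebra R ℚ) :=
      NoZeroDivisors.to_isDomain (AddMonoidAlgebra R ℚ)
    ¬ WfDvdMonoid (AddMonoidAlgebra R ℚ) ∧
    ¬ IsNoetherianRing (AddMonoidAlgebra R ℚ) ∧
    ¬ UniqueFactorizationMonoid (AddMonoidAlgebra R ℚ) := by
  haveI : IsDomain (AddMonoidAlgebra R ℚ) :=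
    NoZeroDivisors.to_isDomain (AddMonoidAlgebra R ℚ)
  have hwf : ¬ WfDvdMonoid (AddMonoidAlgebra R ℚ) := by
    intro h
    set a : ℕ → AddMonoidAlgebra R ℚ :=
      fun n => AddMonoidAlgebra.single ((1/2^n : ℚ)) (1:R) - 1 with ha
    obtain ⟨x, ⟨n, rfl⟩, hmin⟩ :=
      h.wf.has_min (Set.range a) ⟨a 0, 0, rfl⟩
    exact hmin (a (n+1)) ⟨n+1, rfl⟩ (aux_chain n)
  refine ⟨hwf, fun h => hwf ?_, fun h => hwf ?_⟩
  · exact IsNoetherianRing.wfDvdMonoid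
  · infer_instance
end

section
/- Let K be a field. The Krull dimension of the group algebra AddMonoidAlgebra K (Fin n → ℚ) (the posynomial ring Pos(K,ℚ)[x₁,…,xₙ] in n variables with rational exponents) equals n. -/
open Polynomial in
lemma polyKer {S R : Type*} [CommRing S] [CommRing R] (ψ : S →+* R) (x : R)
    (q0 q1 : Ideal R) (hq0 : q0.IsPrime) (hle : q0 ≤ q1) (hx1 : x ∈ q1) (hx0 : x ∉ q0)
    (hψ : ∀ s, ψ s ∈ q1 → s = 0) :
    ∀ P : Polynomial S, P.eval₂ ψ x ∈ q0 → P = 0 := by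
  suffices H : ∀ d (P : Polynomial S), P.natDegree ≤ d → P.eval₂ ψ x ∈ q0 → P = 0 by
    exact fun P h => H P.natDegree P le_rfl h
  intro d
  induction d with
  | zero =>
    intro P hdeg hmem
    rw [Polynomial.eq_C_of_natDegree_le_zero hdeg] at hmem ⊢
    rw [eval₂_C] at hmem
    rw [hψ _ (hle hmem), map_zero]
  | succ d ih =>
    intro P hdeg hmem
    have hdecomp : P.divX.eval₂ ψ x * x + ψ (P.coeff 0) = P.eval₂ ψ x := by
      conv_rhs => rw [← P.divX_mul_X_add]
      simp [eval₂_mul, eval₂_add]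
    have hc : P.coeff 0 = 0 := by
      by_contra hc
      refine hc (hψ _ ?_)
      have : ψ (P.coeff 0) = P.eval₂ ψ x - P.divX.eval₂ ψ x * x := by
        rw [← hdecomp]; ring
      rw [this]
      exact Ideal.sub_mem _ (hle hmem) (Ideal.mul_mem_left _ _ hx1)
    have hmul : P.divX.eval₂ ψ x * x ∈ q0 := by
      rw [hc, map_zero, add_zero] at hdecomp
      rwa [hdecomp]
    have hdiv : P.divX = 0 := by
      refine ih _ ?_ ((hq0.mem_or_mem hmul).resolve_right hx0)
      rw [Polynomial.natDegree_divX_eq_natDegree_tsub_one]; omega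
    have := P.divX_mul_X_add
    rw [hdiv, hc] at this
    simpa using this.symm

open MvPolynomial in
lemma mvKer {K R : Type*} [Field K] [CommRing R] [Nontrivial R] [Algebra K R] :
    ∀ (l : ℕ) (f : Fin l → R) (q : Fin (l + 1) → Ideal R),
      (∀ i, (q i).IsPrime) → Monotone q → (∀ i : Fin l, f i ∈ q i.succ) →
      (∀ i : Fin l, f i ∉ q i.castSucc) →
      ∀ Q : MvPolynomial (Fin l) K, MvPolynomial.aeval f Q ∈ q 0 → Q = 0 := by
  intro l
  induction l with
  | zero =>
    intro f q hprime _ _ _ Q hQ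
    obtain ⟨c, rfl⟩ := MvPolynomial.C_surjective (Fin 0) Q
    by_cases hc : c = 0
    · rw [hc, map_zero]
    · exfalso
      refine (hprime 0).ne_top (Ideal.eq_top_of_isUnit_mem _ ?_ ((IsUnit.mk0 c hc).map (algebraMap K R)))
      simpa [MvPolynomial.aeval_C] using hQ
  | succ l ih =>
    intro f q hprime hmono hin hout Q hQ
    -- key evaluation identity
    set ψ : MvPolynomial (Fin l) K →+* R := (MvPolynomial.aeval (fun i : Fin l => f i.succ)).toRingHom with hψdef
    have hkey : ∀ Q' : MvPolynomial (Fin (l + 1)) K,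
        MvPolynomial.aeval f Q' = Polynomial.eval₂ ψ (f 0) (MvPolynomial.finSuccEquiv K l Q') := by
      intro Q'
      have : (MvPolynomial.aeval f : MvPolynomial (Fin (l+1)) K →ₐ[K] R).toRingHom
          = (Polynomial.eval₂RingHom ψ (f 0)).comp
              ((MvPolynomial.finSuccEquiv K l : MvPolynomial (Fin (l+1)) K ≃ₐ[K] _) :
                MvPolynomial (Fin (l+1)) K →+* Polynomial (MvPolynomial (Fin l) K)) := by
        apply MvPolynomial.ringHom_ext
        · intro r
          simp [ψ, MvPolynomial.finSuccEquiv_apply, MvPolynomial.eval₂Hom_C]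
        · intro i
          refine Fin.cases ?_ ?_ i
          · simp [ψ, MvPolynomial.finSuccEquiv_X_zero]
          · intro j
            simp [ψ, MvPolynomial.finSuccEquiv_X_succ]
      exact congrArg (fun g => g Q') (congrArg DFunLike.coe this)
    -- apply polyKer
    have hP : (MvPolynomial.finSuccEquiv K l Q) = 0 := by
      refine polyKer ψ (f 0) (q 0) (q 1) (hprime 0) (hmono (by norm_num [Fin.le_def])) ?_ ?_ ?_ _ ?_
      · simpa using hin 0
      · simpa using hout 0
      · intro s hs
        refine ih (fun i => f i.succ) (fun i => q i.succ) (fun i => hprime _) ?_ ?_ ?_ s ?_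
        · exact fun a b hab => hmono (Fin.succ_le_succ_iff.mpr hab)
        · intro i; exact hin i.succ
        · intro i
          have := hout i.succ
          rwa [← Fin.succ_castSucc] at this
        · have hs' : (MvPolynomial.aeval fun i : Fin l => f i.succ) s ∈ q 1 := hs
          simpa using hs'
      · rw [← hkey]; exact hQ
    have := congrArg (MvPolynomial.finSuccEquiv K l).symm hP
    simpa using this

lemma exists_rel (K : Type*) [Field K] (n : ℕ)
    (f : Fin (n + 1) → AddMonoidAlgebra K (Fin n → ℚ)) :
    ∃ Q : MvPolynomial (Fin (n + 1)) K, Q ≠ 0 ∧ MvPolynomial.aeval f Q = 0 := by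
  classical
  by_contra hcon
  push_neg at hcon
  have habs : ∀ Q : MvPolynomial (Fin (n + 1)) K, MvPolynomial.aeval f Q = 0 → Q = 0 := by
    intro Q hQ
    by_contra h
    exact hcon Q h hQ
  obtain ⟨A, hA⟩ : ∃ A : Finset (Fin n → ℚ), A = Finset.univ.biUnion (fun i => (f i).coeff.support) := ⟨_, rfl⟩
  obtain ⟨N, hNdef⟩ : ∃ N : ℕ, N = A.prod (fun a => Finset.univ.prod fun j => (a j).den) := ⟨_, rfl⟩
  have hNpos : 0 < N := by
    rw [hNdef]
    exact Finset.prod_pos (fun a _ => Finset.prod_pos fun j _ => (a j).pos)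
  have hNQ : (N : ℚ) ≠ 0 := by exact_mod_cast hNpos.ne'
  obtain ⟨C, hCdef⟩ : ∃ C : ℕ, C = N * (A.sup fun a => Finset.univ.sup fun j => (a j).num.natAbs) := ⟨_, rfl⟩
  have hAk : ∀ a ∈ A, ∀ j, ∃ z : ℤ, (z : ℚ) = N * a j ∧ z.natAbs ≤ C := by
    intro a ha j
    have hdvd : (a j).den ∣ N := by
      rw [hNdef]
      exact dvd_trans (Finset.dvd_prod_of_mem (fun j => (a j).den) (Finset.mem_univ j))
        (Finset.dvd_prod_of_mem (fun a => Finset.univ.prod fun j => (a j).den) ha)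
    have hden : ((a j).den : ℚ) ≠ 0 := by
      exact_mod_cast (a j).den_nz
    refine ⟨(a j).num * ((N / (a j).den : ℕ) : ℤ), ?_, ?_⟩
    · have h0 : ((N / (a j).den : ℕ) : ℚ) = (N : ℚ) / ((a j).den : ℚ) := by
        rw [eq_div_iff hden, ← Nat.cast_mul, Nat.div_mul_cancel hdvd]
      have h1 : ((a j).num : ℚ) = a j * (a j).den :=
        (div_eq_iff hden).mp (Rat.num_div_den (a j))
      rw [Int.cast_mul, Int.cast_natCast, h0, h1]
      field_simp
    · rw [Int.natAbs_mul]
      have h1 : ((N / (a j).den : ℕ) : ℤ).natAbs ≤ N := by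
        simp only [Int.natAbs_natCast]
        exact Nat.div_le_self _ _
      have h2 : (a j).num.natAbs ≤ A.sup fun a => Finset.univ.sup fun j => (a j).num.natAbs := by
        refine le_trans (Finset.le_sup (f := fun j => (a j).num.natAbs) (Finset.mem_univ j)) ?_
        exact Finset.le_sup (f := fun a => Finset.univ.sup fun j => (a j).num.natAbs) ha
      calc (a j).num.natAbs * ((N / (a j).den : ℕ) : ℤ).natAbs
          ≤ (A.sup fun a => Finset.univ.sup fun j => (a j).num.natAbs) * N :=
            Nat.mul_le_mul h2 h1
        _ = C := by rw [hCdef]; exact Nat.mul_comm _ _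
  clear hCdef hNdef
  -- the boundedness predicate
  set Bnd : ℕ → (Fin n → ℚ) → Prop :=
    fun k g => ∀ j, ∃ z : ℤ, (z : ℚ) = N * g j ∧ z.natAbs ≤ k * C with hBnd
  have hBnd0 : ∀ g : Fin n → ℚ, g = 0 → Bnd 0 g := by
    rintro g rfl j
    exact ⟨0, by simp, by simp⟩
  have hBndmono : ∀ k m g, k ≤ m → Bnd k g → Bnd m g := by
    intro k m g hkm hg j
    obtain ⟨z, h1, h2⟩ := hg j
    exact ⟨z, h1, le_trans h2 (Nat.mul_le_mul_right _ hkm)⟩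
  have hBndadd : ∀ k m g h, Bnd k g → Bnd m h → Bnd (k + m) (g + h) := by
    intro k m g h hg hh j
    obtain ⟨z1, h1, h2⟩ := hg j
    obtain ⟨z2, h3, h4⟩ := hh j
    refine ⟨z1 + z2, ?_, ?_⟩
    · push_cast
      rw [h1, h3]
      simp [mul_add]
    · calc (z1 + z2).natAbs ≤ z1.natAbs + z2.natAbs := Int.natAbs_add_le _ _
        _ ≤ k * C + m * C := Nat.add_le_add h2 h4
        _ = (k + m) * C := by ring
  have hsupp_mul : ∀ (u v : AddMonoidAlgebra K (Fin n → ℚ)) (k m : ℕ),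
      (∀ g ∈ u.coeff.support, Bnd k g) → (∀ g ∈ v.coeff.support, Bnd m g) →
      ∀ g ∈ (u * v).coeff.support, Bnd (k + m) g := by
    intro u v k m hu hv g hg
    have hmem := AddMonoidAlgebra.support_coeff_mul_subset u v hg
    rw [Finset.mem_add] at hmem
    obtain ⟨a, ha, b, hb, rfl⟩ := hmem
    exact hBndadd _ _ _ _ (hu a ha) (hv b hb)
  have hsupp_one : ∀ g ∈ (1 : AddMonoidAlgebra K (Fin n → ℚ)).coeff.support, Bnd 0 g := by
    intro g hg
    rw [AddMonoidAlgebra.one_def] at hg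
    have := Finsupp.support_single_subset hg
    simp only [Finset.mem_singleton] at this
    exact hBnd0 g this
  have hsupp_pow : ∀ (i : Fin (n + 1)) (m : ℕ), ∀ g ∈ ((f i) ^ m).coeff.support, Bnd m g := by
    intro i m
    induction m with
    | zero =>
      rw [pow_zero]
      exact hsupp_one
    | succ m ihm =>
      rw [pow_succ]
      refine hsupp_mul _ _ m 1 ihm ?_
      intro a ha
      have haA : a ∈ A := by
        rw [hA]
        exact Finset.mem_biUnion.mpr ⟨i, Finset.mem_univ i, ha⟩
      intro j
      obtain ⟨z, h1, h2⟩ := hAk a haA j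
      exact ⟨z, h1, by simpa using h2⟩
  have hsupp_prod : ∀ (s : Finset (Fin (n + 1))) (β : Fin (n + 1) → ℕ),
      ∀ g ∈ (∏ i ∈ s, f i ^ β i).coeff.support, Bnd (∑ i ∈ s, β i) g := by
    intro s
    induction s using Finset.induction_on with
    | empty =>
      intro β
      rw [Finset.prod_empty, Finset.sum_empty]
      exact hsupp_one
    | insert _ _ hnotmem ihs =>
      intro β
      rw [Finset.prod_insert hnotmem, Finset.sum_insert hnotmem]
      exact hsupp_mul _ _ _ _ (hsupp_pow _ _) (ihs β)
  -- choose the degree bound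
  obtain ⟨c, hcdef⟩ : ∃ c : ℕ, c = 2 * (n + 1) * C + 1 := ⟨_, rfl⟩
  obtain ⟨D, hDdef⟩ : ∃ D : ℕ, D = c ^ n := ⟨_, rfl⟩
  have hD1 : 1 ≤ D := by rw [hDdef]; exact Nat.one_le_pow _ _ (by omega)
  obtain ⟨L, hLdef⟩ : ∃ L : ℤ, L = (((n + 1) * D * C : ℕ) : ℤ) := ⟨_, rfl⟩
  set T : Finset (Fin n → ℚ) :=
    (Finset.Icc (fun _ : Fin n => -L) (fun _ => L)).image
      (fun z => fun j => ((z j : ℚ) / N)) with hT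
  have hTcard : T.card ≤ (2 * ((n + 1) * D * C) + 1) ^ n := by
    refine le_trans Finset.card_image_le (le_of_eq ?_)
    rw [Pi.card_Icc]
    have hIcc : (Finset.Icc (-L) L).card = 2 * ((n + 1) * D * C) + 1 := by
      rw [Int.card_Icc, hLdef]
      omega
    calc (∏ _j : Fin n, (Finset.Icc (-L) L).card)
        = ∏ _j : Fin n, (2 * ((n + 1) * D * C) + 1) := Finset.prod_congr rfl fun j _ => hIcc
      _ = (2 * ((n + 1) * D * C) + 1) ^ n := by
          rw [Finset.prod_const, Finset.card_univ, Fintype.card_fin]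
  have hmemT : ∀ g, Bnd ((n + 1) * D) g → g ∈ T := by
    intro g hg
    choose z hz1 hz2 using hg
    refine Finset.mem_image.mpr ⟨fun j => z j, ?_, ?_⟩
    · rw [Finset.mem_Icc]
      constructor <;> (simp only [Pi.le_def]; intro j; have h2 := hz2 j; omega)
    · funext j
      show ((z j : ℚ)) / (N : ℚ) = g j
      rw [hz1 j, mul_comm, mul_div_assoc, div_self hNQ, mul_one]
  -- the span
  set sing : (Fin n → ℚ) → AddMonoidAlgebra K (Fin n → ℚ) :=
    fun g => AddMonoidAlgebra.single g (1 : K) with hsing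
  set W : Submodule K (AddMonoidAlgebra K (Fin n → ℚ)) :=
    Submodule.span K ((T.image sing : Finset (AddMonoidAlgebra K (Fin n → ℚ))) :
      Set (AddMonoidAlgebra K (Fin n → ℚ))) with hW
  have hmemW : ∀ u : AddMonoidAlgebra K (Fin n → ℚ), (∀ g ∈ u.coeff.support, g ∈ T) → u ∈ W := by
    intro u hu
    have hrepr : u = ∑ g ∈ u.coeff.support, AddMonoidAlgebra.single g (u.coeff g) := by
      conv_lhs => rw [← AddMonoidAlgebra.sum_coeff_single u]
      rfl
    rw [hrepr]
    refine Submodule.sum_mem _ ?_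
    intro g hgs
    have hs : AddMonoidAlgebra.single g (u.coeff g) = (u.coeff g) • sing g := by
      rw [hsing]
      simp [AddMonoidAlgebra.smul_single]
    rw [hs]
    exact Submodule.smul_mem _ _
      (Submodule.subset_span (Finset.mem_coe.mpr (Finset.mem_image_of_mem _ (hu g hgs))))
  have hWfin : FiniteDimensional K W := by
    rw [hW]
    exact FiniteDimensional.span_of_finite K (Finset.finite_toSet _)
  set v : (Fin (n + 1) → Fin (D + 1)) → AddMonoidAlgebra K (Fin n → ℚ) :=
    fun β => ∏ i, f i ^ (β i : ℕ) with hv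
  have hvW : ∀ β, v β ∈ W := by
    intro β
    refine hmemW _ (fun g hg => hmemT g ?_)
    refine hBndmono _ _ _ ?_ (hsupp_prod Finset.univ (fun i => (β i : ℕ)) g hg)
    calc (∑ i, ((β i : ℕ))) ≤ ∑ _i : Fin (n + 1), D :=
          Finset.sum_le_sum fun i _ => Nat.lt_succ_iff.mp (β i).isLt
      _ = (n + 1) * D := by rw [Finset.sum_const, Finset.card_univ, Fintype.card_fin, smul_eq_mul]
  set v' : (Fin (n + 1) → Fin (D + 1)) → W := fun β => ⟨v β, hvW β⟩ with hv'
  have hli : LinearIndependent K v' := by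
    rw [Fintype.linearIndependent_iff]
    intro cf hc β₀
    have hc' : ∑ β, cf β • v β = 0 := by
      have := congrArg (W.subtype) hc
      rw [map_sum] at this
      simpa [hv'] using this
    set toF : (Fin (n + 1) → Fin (D + 1)) → (Fin (n + 1) →₀ ℕ) :=
      fun β => Finsupp.equivFunOnFinite.symm (fun i => (β i : ℕ)) with htoF
    have htoFinj : Function.Injective toF := by
      intro a b hab
      have : (fun i => ((a i : ℕ))) = fun i => ((b i : ℕ)) :=
        Finsupp.equivFunOnFinite.symm.injective hab
      funext i
      exact Fin.ext (congrFun this i)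
    set Q : MvPolynomial (Fin (n + 1)) K :=
      ∑ β, MvPolynomial.monomial (toF β) (cf β) with hQdef
    have hQeval : MvPolynomial.aeval f Q = 0 := by
      rw [hQdef, map_sum, ← hc']
      refine Finset.sum_congr rfl fun β _ => ?_
      rw [MvPolynomial.aeval_monomial, Finsupp.prod_pow]
      have : ∀ i, (toF β) i = (β i : ℕ) := fun i => rfl
      simp only [this]
      rw [Algebra.smul_def, hv]
    have hQ0 : Q = 0 := habs Q hQeval
    have hcoeff : MvPolynomial.coeff (toF β₀) Q = cf β₀ := by
      rw [hQdef, MvPolynomial.coeff_sum]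
      rw [Finset.sum_eq_single β₀]
      · rw [MvPolynomial.coeff_monomial, if_pos rfl]
      · intro b _ hb
        rw [MvPolynomial.coeff_monomial, if_neg (fun h => hb (htoFinj h))]
      · intro h
        exact absurd (Finset.mem_univ β₀) h
    rw [hQ0] at hcoeff
    simpa using hcoeff.symm
  have hcard := hli.fintype_card_le_finrank
  have hcardι : Fintype.card (Fin (n + 1) → Fin (D + 1)) = (D + 1) ^ (n + 1) := by
    rw [Fintype.card_fun, Fintype.card_fin, Fintype.card_fin]
  have hfinrank : Module.finrank K W ≤ (2 * ((n + 1) * D * C) + 1) ^ n := by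
    refine le_trans ?_ (le_trans (Finset.card_image_le (f := sing) (s := T)) hTcard)
    exact finrank_span_finset_le_card (T.image sing)
  have hfinal : (D + 1) ^ (n + 1) ≤ (2 * ((n + 1) * D * C) + 1) ^ n := by
    rw [← hcardι]
    exact le_trans hcard hfinrank
  have harith : (2 * ((n + 1) * D * C) + 1) ^ n < (D + 1) ^ (n + 1) := by
    have h1 : 2 * ((n + 1) * D * C) + 1 ≤ c * D := by
      have h2 : 2 * ((n + 1) * D * C) = (2 * (n + 1) * C) * D := by ring
      rw [h2, hcdef]
      nlinarith [hD1]
    calc (2 * ((n + 1) * D * C) + 1) ^ n ≤ (c * D) ^ n := Nat.pow_le_pow_left h1 n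
      _ = c ^ n * D ^ n := mul_pow c D n
      _ = D * D ^ n := by rw [← hDdef]
      _ = D ^ (n + 1) := (pow_succ' D n).symm
      _ < (D + 1) ^ (n + 1) := Nat.pow_lt_pow_left (by omega) (by omega)
  exact absurd (lt_of_le_of_lt hfinal harith) (lt_irrefl _)

section assembly
variable (K : Type*) [Field K] (n : ℕ)

lemma upper_bound :
    ringKrullDim (AddMonoidAlgebra K (Fin n → ℚ)) ≤ (n : WithBot (WithTop ℕ)) := by
  classical
  have key : ∀ p : LTSeries (PrimeSpectrum (AddMonoidAlgebra K (Fin n → ℚ))), p.length ≤ n := by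
    intro p
    by_contra hlen
    push_neg at hlen
    have hlen' : n + 2 ≤ p.length + 1 := by omega
    set q : Fin (n + 2) → Ideal (AddMonoidAlgebra K (Fin n → ℚ)) :=
      fun j => (p.toFun ⟨(j : ℕ), by omega⟩).asIdeal with hq
    have hqprime : ∀ j, (q j).IsPrime := fun j => (p.toFun _).isPrime
    have hqmono : Monotone q := by
      intro a b hab
      rw [hq]
      simp only
      rw [PrimeSpectrum.asIdeal_le_asIdeal]
      exact p.strictMono.monotone (Fin.mk_le_mk.mpr hab)
    have hstep : ∀ i : Fin (n + 1), ∃ x, x ∈ q i.succ ∧ x ∉ q i.castSucc := by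
      intro i
      refine SetLike.exists_of_lt ?_
      rw [hq]
      simp only
      rw [PrimeSpectrum.asIdeal_lt_asIdeal]
      exact p.strictMono (Fin.mk_lt_mk.mpr (by rw [Fin.coe_castSucc, Fin.val_succ]; omega))
    choose x hx1 hx0 using hstep
    obtain ⟨Q, hQne, hQ0⟩ := exists_rel K n x
    refine hQne (mvKer (n + 1) x q hqprime hqmono hx1 hx0 Q ?_)
    rw [hQ0]
    exact (q 0).zero_mem
  rw [ringKrullDim, Order.krullDim_eq_iSup_length]
  have h2 : (⨆ p : LTSeries (PrimeSpectrum (AddMonoidAlgebra K (Fin n → ℚ))), (p.length : ℕ∞))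
      ≤ (n : ℕ∞) := iSup_le fun p => by exact_mod_cast key p
  have h3 : (↑(⨆ p : LTSeries (PrimeSpectrum (AddMonoidAlgebra K (Fin n → ℚ))), (p.length : ℕ∞)) :
      WithBot ℕ∞) ≤ ((n : ℕ∞) : WithBot ℕ∞) := WithBot.coe_le_coe.mpr h2
  exact h3.trans_eq (by norm_cast)

lemma lower_bound :
    (n : WithBot (WithTop ℕ)) ≤ ringKrullDim (AddMonoidAlgebra K (Fin n → ℚ)) := by
  classical
  haveI : IsDomain (AddMonoidAlgebra K (Fin n → ℚ)) := NoZeroDivisors.to_isDomain _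
  set π : ℕ → ((Fin n → ℚ) →+ (Fin n → ℚ)) := fun m =>
    { toFun := fun g j => if (j : ℕ) < m then g j else 0
      map_zero' := by funext j; simp
      map_add' := by
        intro g h
        funext j
        by_cases hj : (j : ℕ) < m <;> simp [hj] } with hπ
  have hπ_apply : ∀ m g j, π m g j = if (j : ℕ) < m then g j else 0 := fun m g j => rfl
  set ρ : ℕ → (AddMonoidAlgebra K (Fin n → ℚ) →+* AddMonoidAlgebra K (Fin n → ℚ)) :=
    fun m => AddMonoidAlgebra.mapDomainRingHom K (π m) with hρ
  have hρ_single : ∀ m g (c : K),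
      ρ m (AddMonoidAlgebra.single g c) = AddMonoidAlgebra.single (π m g) c := by
    intro m g c
    exact AddMonoidAlgebra.mapDomain_single
  set P : Fin (n + 1) → PrimeSpectrum (AddMonoidAlgebra K (Fin n → ℚ)) :=
    fun i => ⟨RingHom.ker (ρ (n - (i : ℕ))), RingHom.ker_isPrime _⟩ with hP
  have hcomp : ∀ (m₁ m₂ : ℕ), m₁ ≤ m₂ → ∀ u, ρ m₂ u = 0 → ρ m₁ u = 0 := by
    intro m₁ m₂ hm u hu
    have hfun : (⇑(π m₁) ∘ ⇑(π m₂)) = ⇑(π m₁) := by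
      funext g
      funext j
      by_cases hj : (j : ℕ) < m₁
      · simp [hπ_apply, hj, lt_of_lt_of_le hj hm]
      · simp [hπ_apply, hj]
    have : ρ m₁ u = AddMonoidAlgebra.mapDomain (π m₁) (AddMonoidAlgebra.mapDomain (π m₂) u) := by
      show AddMonoidAlgebra.ofCoeff (Finsupp.mapDomain (π m₁) u.coeff) =
        AddMonoidAlgebra.ofCoeff (Finsupp.mapDomain (π m₁) (Finsupp.mapDomain (π m₂) u.coeff))
      rw [← Finsupp.mapDomain_comp (f := ⇑(π m₂)) (g := ⇑(π m₁))]
      rw [hfun]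
    rw [this]
    have hu' : AddMonoidAlgebra.mapDomain (π m₂) u = 0 := hu
    rw [hu']
    exact AddMonoidAlgebra.mapDomain_zero _
  have hstep : ∀ i : Fin n, P i.castSucc < P i.succ := by
    intro i
    have hival : (i : ℕ) < n := i.isLt
    set j₀ : Fin n := ⟨n - (i : ℕ) - 1, by omega⟩ with hj₀
    set g₀ : Fin n → ℚ := Pi.single j₀ 1 with hg₀
    have hg₀ne : g₀ ≠ 0 := by
      intro h
      have := congrFun h j₀
      rw [hg₀] at this
      simp [Pi.single_eq_same] at this
    set w : AddMonoidAlgebra K (Fin n → ℚ) :=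
      AddMonoidAlgebra.single g₀ 1 - AddMonoidAlgebra.single 0 1 with hw
    have hπg₀_zero : π (n - ((i : ℕ) + 1)) g₀ = 0 := by
      funext j
      rw [hπ_apply]
      by_cases hj : (j : ℕ) < n - ((i : ℕ) + 1)
      · rw [if_pos hj, hg₀]
        have hne : j ≠ j₀ := by
          intro hjeq
          rw [hjeq, hj₀] at hj
          have hj' : n - (i : ℕ) - 1 < n - ((i : ℕ) + 1) := hj
          omega
        exact Pi.single_eq_of_ne (M := fun _ : Fin n => ℚ) hne 1
      · rw [if_neg hj]
        rfl
    have hπg₀_keep : π (n - (i : ℕ)) g₀ = g₀ := by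
      funext j
      rw [hπ_apply]
      by_cases hj : (j : ℕ) < n - (i : ℕ)
      · rw [if_pos hj]
      · rw [if_neg hj, hg₀]
        have hne : j ≠ j₀ := by
          intro hjeq
          apply hj
          rw [hjeq, hj₀]
          show n - (i : ℕ) - 1 < n - (i : ℕ)
          omega
        exact (Pi.single_eq_of_ne (M := fun _ : Fin n => ℚ) hne 1).symm
    have hwmem : w ∈ RingHom.ker (ρ (n - ((i : ℕ) + 1))) := by
      rw [RingHom.mem_ker, hw, map_sub, hρ_single, hρ_single, hπg₀_zero, map_zero]
      simp
    have hwnot : w ∉ RingHom.ker (ρ (n - (i : ℕ))) := by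
      rw [RingHom.mem_ker, hw, map_sub, hρ_single, hρ_single, hπg₀_keep, map_zero]
      intro hzero
      have heq : AddMonoidAlgebra.single g₀ (1 : K) = AddMonoidAlgebra.single 0 1 :=
        sub_eq_zero.mp hzero
      have h1 : (AddMonoidAlgebra.single g₀ (1 : K)).coeff g₀ = 1 := Finsupp.single_eq_same
      rw [heq] at h1
      rw [AddMonoidAlgebra.coeff_single, Finsupp.single_eq_of_ne' (Ne.symm hg₀ne)] at h1
      exact one_ne_zero h1.symm
    rw [hP]
    rw [← PrimeSpectrum.asIdeal_lt_asIdeal]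
    simp only
    have hle : RingHom.ker (ρ (n - ((i.castSucc : Fin (n+1)) : ℕ)))
        ≤ RingHom.ker (ρ (n - ((i.succ : Fin (n+1)) : ℕ))) := by
      intro u hu
      rw [RingHom.mem_ker] at hu ⊢
      refine hcomp _ _ ?_ u hu
      simp [Fin.coe_castSucc, Fin.val_succ]
      omega
    refine lt_of_le_not_ge hle ?_
    intro hcontra
    have : w ∈ RingHom.ker (ρ (n - ((i.castSucc : Fin (n+1)) : ℕ))) := by
      refine hcontra ?_
      simpa [Fin.val_succ] using hwmem
    refine hwnot ?_
    simpa [Fin.coe_castSucc] using this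
  set series : LTSeries (PrimeSpectrum (AddMonoidAlgebra K (Fin n → ℚ))) :=
    ⟨n, P, hstep⟩ with hseries
  have := Order.LTSeries.length_le_krullDim series
  rw [ringKrullDim]
  exact_mod_cast this

end assembly

/-- For a field `K`, the Krull dimension of the posynomial ring
`Pos(K,ℚ)[x₁,…,xₙ] = AddMonoidAlgebra K (Fin n → ℚ)` equals `n`. -/
theorem stmt_6 (K : Type*) [Field K] (n : ℕ) :
    ringKrullDim (AddMonoidAlgebra K (Fin n → ℚ)) = n := by
  exact le_antisymm (upper_bound K n) (lower_bound K n)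
end

section
/- Let K be a field and let φ : AddMonoidAlgebra K (Fin n → ℤ) →+* AddMonoidAlgebra K (Fin n → ℚ) be the ring homomorphism induced by mapping each exponent vector s ∈ ℤⁿ to its image in ℚⁿ under the canonical inclusion (mapping single s c to single (↑s) c). Then every element of AddMonoidAlgebra K (Fin n → ℚ) is integral over the image of φ; that is, φ is an integral ring homomorphism. -/
/-- For a field `K`, the ring homomorphism
`φ : AddMonoidAlgebra K (Fin n → ℤ) →+* AddMonoidAlgebra K (Fin n → ℚ)`
induced by the canonical inclusion of exponents `ℤⁿ ↪ ℚⁿ`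
(i.e. `single s c ↦ single ↑s c`) is integral:
every element of `AddMonoidAlgebra K (Fin n → ℚ)` is integral over its image. -/
theorem stmt_7 (K : Type*) [Field K] (n : ℕ)
    (φ : AddMonoidAlgebra K (Fin n → ℤ) →+* AddMonoidAlgebra K (Fin n → ℚ))
    (hφ : ∀ (s : Fin n → ℤ) (c : K),
      φ (AddMonoidAlgebra.single s c) =
        AddMonoidAlgebra.single (fun i => (s i : ℚ)) c) :
    φ.IsIntegral := by
  letI : Algebra (AddMonoidAlgebra K (Fin n → ℤ)) (AddMonoidAlgebra K (Fin n → ℚ)) :=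
    φ.toAlgebra
  have hsingle : ∀ (q : Fin n → ℚ) (c : K),
      IsIntegral (AddMonoidAlgebra K (Fin n → ℤ)) (AddMonoidAlgebra.single q c) := by
    intro q c
    set m : ℕ := ∏ i, (q i).den with hm
    have hm0 : m ≠ 0 := Finset.prod_ne_zero_iff.mpr fun i _ => (q i).den_nz
    set s : Fin n → ℤ := fun i => (q i).num * ((m / (q i).den : ℕ) : ℤ) with hsdef
    have hs : ∀ i, (s i : ℚ) = m * q i := by
      intro i
      have hdvd : (q i).den ∣ m := Finset.dvd_prod_of_mem _ (Finset.mem_univ i)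
      have hx : ((m / (q i).den : ℕ) : ℚ) * (q i).den = m := by
        rw [← Nat.cast_mul, Nat.div_mul_cancel hdvd]
      have hden : ((q i).den : ℚ) ≠ 0 := by exact_mod_cast (q i).den_nz
      simp only [hsdef]
      have hq : (q i) * (q i).den = (q i).num := Rat.mul_den_eq_num (q i)
      rw [Int.cast_mul, Int.cast_natCast]
      refine mul_right_cancel₀ hden ?_
      rw [mul_assoc, hx, mul_assoc, hq, mul_comm]
    have key : (AddMonoidAlgebra.single q c) ^ m =
        algebraMap (AddMonoidAlgebra K (Fin n → ℤ)) (AddMonoidAlgebra K (Fin n → ℚ))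
          (AddMonoidAlgebra.single s (c ^ m)) := by
      rw [AddMonoidAlgebra.single_pow]
      show _ = φ _
      rw [hφ]
      congr 1
      funext i
      rw [hs i, Pi.smul_apply, nsmul_eq_mul]
    refine ⟨Polynomial.X ^ m - Polynomial.C (AddMonoidAlgebra.single s (c ^ m)),
      Polynomial.monic_X_pow_sub_C _ hm0, ?_⟩
    simp [key]
  intro x
  induction x using AddMonoidAlgebra.induction with
  | zero => exact isIntegral_zero
  | single_add a b f _ _ ih => exact (hsingle a b).add ih
end

section
/- Let R be a commutative integral domain. The ideal I of AddMonoidAlgebra R ℚ generated by the set { single (1/n) 1 - 1 : n a positive natural number } is a prime ideal. -/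
open AddMonoidAlgebra

/-- For a commutative integral domain `R`, the ideal of
`AddMonoidAlgebra R ℚ` generated by `{ x^(1/n) - 1 : n > 0 }`,
i.e. by the elements `single (1/n) 1 - 1`, is prime. -/
theorem stmt_8 (R : Type*) [CommRing R] [IsDomain R] :
    (Ideal.span {f : AddMonoidAlgebra R ℚ |
        ∃ n : ℕ, 0 < n ∧
          f = AddMonoidAlgebra.single (1 / (n : ℚ)) (1 : R) - 1}).IsPrime := by
  set S : Set (AddMonoidAlgebra R ℚ) :=
    {f | ∃ n : ℕ, 0 < n ∧ f = AddMonoidAlgebra.single (1 / (n : ℚ)) (1 : R) - 1} with hS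
  set J : Ideal (AddMonoidAlgebra R ℚ) := Ideal.span S with hJ
  let φ : AddMonoidAlgebra R ℚ →ₐ[R] R := AddMonoidAlgebra.lift R R ℚ 1
  have hφs : ∀ (a : ℚ) (b : R), φ (AddMonoidAlgebra.single a b) = b := by
    intro a b
    simp [φ, AddMonoidAlgebra.lift_single]
  -- all single q 1 - 1 lie in J
  have hT : ∀ q : ℚ, (AddMonoidAlgebra.single q (1:R) - 1) ∈ J := by
    let T : AddSubgroup ℚ :=
      { carrier := {a | (AddMonoidAlgebra.single a (1:R) - 1) ∈ J}
        zero_mem' := by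
          have : (AddMonoidAlgebra.single (0:ℚ) (1:R) - 1) = 0 := by
            rw [← AddMonoidAlgebra.one_def]; ring
          simp only [Set.mem_setOf_eq, this]; exact J.zero_mem
        add_mem' := by
          intro a b ha hb
          have h : (AddMonoidAlgebra.single (a+b) (1:R) - 1) =
              AddMonoidAlgebra.single a (1:R) * (AddMonoidAlgebra.single b (1:R) - 1)
                + (AddMonoidAlgebra.single a (1:R) - 1) := by
            rw [mul_sub, AddMonoidAlgebra.single_mul_single, mul_one]; ring
          simp only [Set.mem_setOf_eq] at *
          rw [h]
          exact J.add_mem (J.mul_mem_left _ hb) ha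
        neg_mem' := by
          intro a ha
          have h : (AddMonoidAlgebra.single (-a) (1:R) - 1) =
              -(AddMonoidAlgebra.single (-a) (1:R) *
                (AddMonoidAlgebra.single a (1:R) - 1)) := by
            rw [mul_sub, AddMonoidAlgebra.single_mul_single, mul_one, neg_add_cancel,
              ← AddMonoidAlgebra.one_def]; ring
          simp only [Set.mem_setOf_eq] at *
          rw [h]
          exact J.neg_mem (J.mul_mem_left _ ha) }
    intro q
    have h1 : ∀ n : ℕ, 0 < n → (1/(n:ℚ)) ∈ T := by
      intro n hn
      exact Ideal.subset_span ⟨n, hn, rfl⟩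
    have hq : (q.num • ((1:ℚ)/(q.den:ℚ))) ∈ T :=
      T.zsmul_mem (h1 q.den q.pos) q.num
    have : q.num • ((1:ℚ)/(q.den:ℚ)) = q := by
      rw [zsmul_eq_mul, mul_one_div, Rat.num_div_den]
    rwa [this] at hq
  -- key : f - C (φ f) ∈ J for all f
  have key : ∀ f : AddMonoidAlgebra R ℚ,
      f - algebraMap R (AddMonoidAlgebra R ℚ) (φ f) ∈ J := by
    intro f
    induction f using AddMonoidAlgebra.induction with
    | zero => simp only [map_zero, sub_zero]; exact J.zero_mem
    | single_add a b g _ _ ih =>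
      have hsingle : (AddMonoidAlgebra.single a b
          - algebraMap R (AddMonoidAlgebra R ℚ) (φ (AddMonoidAlgebra.single a b))) ∈ J := by
        have h : AddMonoidAlgebra.single a b
            - algebraMap R (AddMonoidAlgebra R ℚ) (φ (AddMonoidAlgebra.single a b))
            = b • (AddMonoidAlgebra.single a (1:R) - 1) := by
          rw [hφs, smul_sub, AddMonoidAlgebra.smul_single, smul_eq_mul, mul_one,
            Algebra.algebraMap_eq_smul_one]
        rw [h, Algebra.smul_def]
        exact J.mul_mem_left _ (hT a)
      have e : ∀ x y : AddMonoidAlgebra R ℚ,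
          (x + y) - algebraMap R (AddMonoidAlgebra R ℚ) (φ (x + y))
          = (x - algebraMap R (AddMonoidAlgebra R ℚ) (φ x))
            + (y - algebraMap R (AddMonoidAlgebra R ℚ) (φ y)) := by
        intro x y; rw [map_add, map_add]; ring
      rw [e (AddMonoidAlgebra.single a b) g]
      exact J.add_mem hsingle ih
  have hker : J = RingHom.ker φ.toRingHom := by
    apply le_antisymm
    · rw [hJ, Ideal.span_le]
      rintro f ⟨n, hn, rfl⟩
      simp only [SetLike.mem_coe, RingHom.mem_ker, AlgHom.toRingHom_eq_coe,
        RingHom.coe_coe, map_sub, map_one, hφs, sub_self]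
    · intro f hf
      have hf0 : φ f = 0 := hf
      have := key f
      rwa [hf0, map_zero, sub_zero] at this
  rw [hker]
  exact RingHom.ker_isPrime φ.toRingHom
end

section
/- Let K be an algebraically closed field and let I be an ideal of the Laurent polynomial ring AddMonoidAlgebra K (Fin n → ℤ). Then there exists a point a : Fin n → Kˣ with ev_a f = 0 for every f ∈ I (i.e., V_Pos(I) ≠ ∅) if and only if I is a proper ideal (I ≠ ⊤). -/
/-- Evaluation of a Laurent polynomial `f ∈ AddMonoidAlgebra K (Fin n → ℤ)` at a
point `a : Fin n → Kˣ` with all coordinates invertible: this is the function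
underlying the evaluation ring homomorphism determined by
`single s c ↦ c * ∏ i, (a i : K) ^ (s i)` (integer powers). -/
noncomputable def laurentEval {K : Type*} [Field K] {n : ℕ} (a : Fin n → Kˣ)
    (f : AddMonoidAlgebra K (Fin n → ℤ)) : K :=
  f.coeff.sum fun s c => c * ∏ i, ((a i : K) ^ (s i))

lemma fg_pi_int (n : ℕ) : AddMonoid.FG (Fin n → ℤ) := by
  have h1 : Module.Finite ℤ (Fin n → ℤ) := inferInstance
  have h2 : AddGroup.FG (Fin n → ℤ) := Module.Finite.iff_addGroup_fg.mp h1
  exact AddGroup.fg_iff_addMonoid_fg.mp h2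

/-- Nullstellensatz for Laurent polynomials: For an algebraically
closed field `K` and an ideal `I` of the Laurent polynomial ring
`AddMonoidAlgebra K (Fin n → ℤ)`, the zero set `V_Pos(I) ⊆ (Kˣ)ⁿ` is nonempty
iff `I` is a proper ideal. -/
theorem stmt_9 (K : Type*) [Field K] [IsAlgClosed K] (n : ℕ)
    (I : Ideal (AddMonoidAlgebra K (Fin n → ℤ))) :
    (∃ a : Fin n → Kˣ, ∀ f ∈ I, laurentEval a f = 0) ↔ I ≠ ⊤ := by
  constructor
  · rintro ⟨a, ha⟩ rfl
    have h1 : laurentEval a 1 = 0 := ha 1 trivial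
    rw [show (1 : AddMonoidAlgebra K (Fin n → ℤ)) = AddMonoidAlgebra.single 0 1 from rfl] at h1
    rw [laurentEval, AddMonoidAlgebra.coeff_single, Finsupp.sum_single_index (by simp)] at h1
    simp at h1
  · intro hI
    obtain ⟨m, hm, hIm⟩ := Ideal.exists_le_maximal I hI
    haveI := hm
    set A := AddMonoidAlgebra K (Fin n → ℤ)
    set L := A ⧸ m
    haveI : AddMonoid.FG (Fin n → ℤ) := fg_pi_int n
    haveI : Algebra.FiniteType K A := AddMonoidAlgebra.finiteType_of_fg K (Fin n → ℤ)
    haveI : Algebra.FiniteType K L := Algebra.FiniteType.of_surjective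
      (Ideal.Quotient.mkₐ K m) (Ideal.Quotient.mkₐ_surjective K m)
    obtain ⟨N, hN, g, hg⟩ := Algebra.FiniteType.iff_quotient_mvPolynomial'.mp
      (inferInstance : Algebra.FiniteType K L)
    haveI := hN
    have halg : (algebraMap K L).IsIntegral := by
      have hint : (g.toRingHom.comp MvPolynomial.C).IsIntegral := by
        letI : Field L := Ideal.Quotient.field m
        exact MvPolynomial.comp_C_integral_of_surjective_of_isJacobsonRing g.toRingHom
          (by exact hg)
      convert hint using 1
      ext x
      simp [g.commutes]
    haveI : Algebra.IsIntegral K L :=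
      Algebra.isIntegral_def.mpr (fun x => halg x)
    have hsurj : Function.Surjective (algebraMap K L) :=
      IsAlgClosed.algebraMap_bijective_of_isIntegral.2
    have hinj : Function.Injective (algebraMap K L) := (algebraMap K L).injective
    let e : K ≃+* L := RingEquiv.ofBijective (algebraMap K L) ⟨hinj, hsurj⟩
    let φ : A →+* K := e.symm.toRingHom.comp (Ideal.Quotient.mk m)
    have hφ0 : ∀ f ∈ I, φ f = 0 := by
      intro f hf
      have : Ideal.Quotient.mk m f = 0 := Ideal.Quotient.eq_zero_iff_mem.mpr (hIm hf)
      simp [φ, this]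
    let ψ : Multiplicative (Fin n → ℤ) →* Kˣ :=
      (φ.toMonoidHom.comp (AddMonoidAlgebra.of K (Fin n → ℤ))).toHomUnits
    refine ⟨fun i => ψ (Multiplicative.ofAdd (Pi.single i 1)), fun f hf => ?_⟩
    have key : ∀ s : Fin n → ℤ,
        (∏ i, ((ψ (Multiplicative.ofAdd (Pi.single i 1)) : K) ^ (s i)))
          = φ (AddMonoidAlgebra.single s 1) := by
      intro s
      have hs : Multiplicative.ofAdd s
          = ∏ i, (Multiplicative.ofAdd (Pi.single i (1 : ℤ))) ^ (s i) := by
        apply Multiplicative.toAdd.injective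
        rw [toAdd_prod]
        simp only [toAdd_zpow, toAdd_ofAdd]
        rw [← Finset.univ_sum_single s]
        refine Finset.sum_congr rfl fun i _ => ?_
        ext j
        by_cases h : j = i <;> simp [h, Pi.single_apply]
      have : ψ (Multiplicative.ofAdd s)
          = ∏ i, (ψ (Multiplicative.ofAdd (Pi.single i 1))) ^ (s i) := by
        rw [hs, map_prod]
        simp [map_zpow]
      have h2 : ((ψ (Multiplicative.ofAdd s)) : K)
          = φ (AddMonoidAlgebra.single s 1) := by
        rw [MonoidHom.coe_toHomUnits]
        rfl
      rw [← h2, this]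
      push_cast
      rfl
    have hval : laurentEval (fun i => ψ (Multiplicative.ofAdd (Pi.single i 1))) f = φ f := by
      rw [laurentEval]
      conv_rhs => rw [← AddMonoidAlgebra.sum_coeff_single f]
      rw [map_finsuppSum]
      refine Finsupp.sum_congr fun s _ => ?_
      rw [key s]
      have h3 : (AddMonoidAlgebra.single s (f.coeff s) : A)
          = AddMonoidAlgebra.single 0 (f.coeff s) * AddMonoidAlgebra.single s 1 := by
        rw [AddMonoidAlgebra.single_mul_single, zero_add, mul_one]
      rw [h3, map_mul]
      congr 1
      have h4 : (AddMonoidAlgebra.single (0 : Fin n → ℤ) (f.coeff s) : A)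
          = algebraMap K A (f.coeff s) := rfl
      rw [h4]
      show f.coeff s = e.symm (Ideal.Quotient.mk m (algebraMap K A (f.coeff s)))
      have h5 : Ideal.Quotient.mk m (algebraMap K A (f.coeff s)) = e (f.coeff s) := rfl
      rw [h5, RingEquiv.symm_apply_apply]
    rw [hval]
    exact hφ0 f hf
end

section
/- Let K be a field of characteristic 0 and let p₀, p₁, …, pₙ be pairwise distinct prime numbers. Then in the group algebra AddMonoidAlgebra K ℚ, the element single (1/p₀) 1 - 1 does not belong to the ideal generated by { single (1/pᵢ) 1 - 1 : i = 1,…,n }. -/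
/-- Let `K` be a field of characteristic 0 and `p 0, p 1, …, p n`
pairwise distinct prime numbers. Then in `AddMonoidAlgebra K ℚ`, the element
`single (1/p 0) 1 - 1` (the posynomial `x^(1/p₀) - 1`) does not belong to the
ideal generated by the elements `single (1/p i) 1 - 1` for `i ≠ 0`. -/
theorem stmt_11 (K : Type*) [Field K] [CharZero K] (n : ℕ)
    (p : Fin (n + 1) → ℕ) (hp : ∀ i, (p i).Prime)
    (hinj : Function.Injective p) :
    AddMonoidAlgebra.single (1 / (p 0 : ℚ)) (1 : K) - 1 ∉
      Ideal.span {f : AddMonoidAlgebra K ℚ |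
        ∃ i : Fin (n + 1), i ≠ 0 ∧
          f = AddMonoidAlgebra.single (1 / (p i : ℚ)) (1 : K) - 1} := by
  intro hmem
  set N : ℕ := ∏ i ∈ Finset.univ.erase (0 : Fin (n + 1)), p i with hN
  have hNpos : 0 < N := Finset.prod_pos fun i _ => (hp i).pos
  have hNne : (N : ℚ) ≠ 0 := by exact_mod_cast hNpos.ne'
  have hp0notdvd : ¬ (p 0 ∣ N) := by
    intro h
    obtain ⟨i, hi, hdvd⟩ := (Nat.Prime.prime (hp 0)).exists_mem_finset_dvd h
    have : p 0 = p i := ((Nat.prime_dvd_prime_iff_eq (hp 0) (hp i)).mp hdvd)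
    exact (Finset.mem_erase.mp hi).1 (hinj this).symm
  set G : AddSubgroup ℚ := AddSubgroup.zmultiples (1 / (N : ℚ)) with hG
  -- the quotient map
  let φ : AddMonoidAlgebra K ℚ →+* AddMonoidAlgebra K (ℚ ⧸ G) :=
    AddMonoidAlgebra.mapDomainRingHom K (QuotientAddGroup.mk' G)
  have hgen : ∀ i : Fin (n + 1), i ≠ 0 →
      φ (AddMonoidAlgebra.single (1 / (p i : ℚ)) (1 : K) - 1) = 0 := by
    intro i hi
    have hdvd : p i ∣ N := Finset.dvd_prod_of_mem p (by simp [hi])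
    have hmemG : (1 / (p i : ℚ)) ∈ G := by
      obtain ⟨k, hk⟩ := hdvd
      refine ⟨(k : ℤ), ?_⟩
      have hpi : (p i : ℚ) ≠ 0 := by exact_mod_cast (hp i).pos.ne'
      have hkne : (k : ℚ) ≠ 0 := by
        intro h0
        apply hNne
        rw [hk]; push_cast; rw [h0, mul_zero]
      have hNk : (N : ℚ) = (p i : ℚ) * k := by exact_mod_cast congrArg (Nat.cast : ℕ → ℚ) hk
      simp only [zsmul_eq_mul, Int.cast_natCast]
      field_simp [hNk]
      rw [hNk]; ring
    have h1 : φ (AddMonoidAlgebra.single (1 / (p i : ℚ)) (1 : K)) =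
        AddMonoidAlgebra.single ((QuotientAddGroup.mk' G) (1 / (p i : ℚ))) (1 : K) :=
      AddMonoidAlgebra.mapDomain_single
    have h2 : ((QuotientAddGroup.mk' G) (1 / (p i : ℚ)) : ℚ ⧸ G) = 0 := by
      rwa [QuotientAddGroup.mk'_apply, QuotientAddGroup.eq_zero_iff]
    rw [map_sub, map_one, h1, h2]
    simp [AddMonoidAlgebra.one_def]
  have hker : Ideal.span {f : AddMonoidAlgebra K ℚ |
        ∃ i : Fin (n + 1), i ≠ 0 ∧
          f = AddMonoidAlgebra.single (1 / (p i : ℚ)) (1 : K) - 1} ≤ RingHom.ker φ := by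
    rw [Ideal.span_le]
    rintro f ⟨i, hi, rfl⟩
    exact hgen i hi
  have h0 : φ (AddMonoidAlgebra.single (1 / (p 0 : ℚ)) (1 : K) - 1) = 0 := hker hmem
  have hnotmem : (1 / (p 0 : ℚ)) ∉ G := by
    rintro ⟨z, hz⟩
    have hp0 : (p 0 : ℚ) ≠ 0 := by exact_mod_cast (hp 0).pos.ne'
    simp only [zsmul_eq_mul] at hz
    have hzN : (z : ℚ) * p 0 = N := by field_simp at hz; linarith
    have hzpos : (z : ℚ) = (N : ℚ) / (p 0 : ℚ) := by field_simp [hzN]; exact hzN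
    have hq : (N : ℚ) = (p 0 : ℚ) * z := by linarith
    have hint : (N : ℤ) = (p 0 : ℤ) * z := by exact_mod_cast hq
    have hdvd : (p 0 : ℤ) ∣ (N : ℤ) := ⟨z, hint⟩
    exact hp0notdvd (by exact_mod_cast hdvd)
  have hq0 : ((QuotientAddGroup.mk' G) (1 / (p 0 : ℚ)) : ℚ ⧸ G) ≠ 0 := by
    rw [QuotientAddGroup.mk'_apply, Ne, QuotientAddGroup.eq_zero_iff]
    exact hnotmem
  have h1 : φ (AddMonoidAlgebra.single (1 / (p 0 : ℚ)) (1 : K)) =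
      AddMonoidAlgebra.single ((QuotientAddGroup.mk' G) (1 / (p 0 : ℚ))) (1 : K) :=
    AddMonoidAlgebra.mapDomain_single
  rw [map_sub, map_one, h1, sub_eq_zero] at h0
  have hone : (1 : AddMonoidAlgebra K (ℚ ⧸ G)) =
      AddMonoidAlgebra.single (0 : ℚ ⧸ G) (1 : K) := AddMonoidAlgebra.one_def
  rw [hone] at h0
  have := AddMonoidAlgebra.single_inj.mp h0
  rcases this with ⟨h, -⟩ | ⟨h, -⟩
  · exact hq0 h
  · exact one_ne_zero h
end

section
/- Let K be a field of characteristic 0, let A be any set of prime numbers, and let I be the ideal of AddMonoidAlgebra K ℚ generated by { single (1/q) 1 - 1 : q ∈ A }. Then for every prime number p, the element single (1/p) 1 - 1 belongs to I if and only if p ∈ A. -/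
/-- Let `K` be a field of characteristic 0, `A` a set of prime
numbers, and `I` the ideal of `AddMonoidAlgebra K ℚ` generated by
`{ single (1/q) 1 - 1 : q ∈ A }`. Then for every prime `p`, the element
`single (1/p) 1 - 1` belongs to `I` iff `p ∈ A`. -/
theorem stmt_12 (K : Type*) [Field K] [CharZero K] (A : Set ℕ)
    (hA : ∀ q ∈ A, Nat.Prime q) (p : ℕ) (hp : p.Prime) :
    AddMonoidAlgebra.single (1 / (p : ℚ)) (1 : K) - 1 ∈
      Ideal.span ((fun q : ℕ =>
        AddMonoidAlgebra.single (1 / (q : ℚ)) (1 : K) - 1) '' A) ↔ p ∈ A := by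
  constructor
  · intro hmem
    by_contra hpA
    -- the subgroup generated by the 1/q
    set H : AddSubgroup ℚ := AddSubgroup.closure ((fun q : ℕ => 1 / (q : ℚ)) '' A) with hH
    let f : ℚ →+ ℚ ⧸ H := QuotientAddGroup.mk' H
    let φ : AddMonoidAlgebra K ℚ →+* AddMonoidAlgebra K (ℚ ⧸ H) :=
      AddMonoidAlgebra.mapDomainRingHom K f
    have hφsingle : ∀ a : ℚ, φ (AddMonoidAlgebra.single a (1 : K))
        = AddMonoidAlgebra.single (f a) (1 : K) := fun a => AddMonoidAlgebra.mapDomain_single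
    have hker : Ideal.span ((fun q : ℕ =>
        AddMonoidAlgebra.single (1 / (q : ℚ)) (1 : K) - 1) '' A) ≤ RingHom.ker φ := by
      rw [Ideal.span_le]
      rintro _ ⟨q, hq, rfl⟩
      simp only [SetLike.mem_coe, RingHom.mem_ker, map_sub, map_one]
      have h1 : f (1 / (q : ℚ)) = 0 := by
        rw [QuotientAddGroup.mk'_apply, QuotientAddGroup.eq_zero_iff]
        exact AddSubgroup.subset_closure ⟨q, hq, rfl⟩
      rw [hφsingle, h1, sub_eq_zero]
      rfl
    have h2 := hker hmem
    rw [RingHom.mem_ker, map_sub, map_one, sub_eq_zero, hφsingle] at h2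
    have h3 : f (1 / (p : ℚ)) = 0 := by
      have hone : (1 : AddMonoidAlgebra K (ℚ ⧸ H))
          = AddMonoidAlgebra.single (0 : ℚ ⧸ H) (1 : K) := rfl
      rw [hone] at h2
      rcases AddMonoidAlgebra.single_inj.mp h2 with ⟨h, _⟩ | ⟨h, _⟩
      · exact h
      · exact absurd h one_ne_zero
    have hmemH : (1 / (p : ℚ)) ∈ H := by
      rwa [QuotientAddGroup.mk'_apply, QuotientAddGroup.eq_zero_iff] at h3
    -- now derive a contradiction using denominators
    let S : AddSubgroup ℚ :=
      { carrier := {x : ℚ | ¬ p ∣ x.den}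
        zero_mem' := by
          simp only [Set.mem_setOf_eq, Rat.den_ofNat]
          exact fun h => hp.one_lt.ne' (Nat.eq_one_of_dvd_one h)
        add_mem' := by
          intro a b ha hb hd
          rcases hp.dvd_mul.mp (hd.trans (Rat.add_den_dvd a b)) with h | h
          · exact ha h
          · exact hb h
        neg_mem' := by
          intro a ha
          simpa using ha }
    have hHS : H ≤ S := by
      rw [hH, AddSubgroup.closure_le]
      rintro _ ⟨q, hq, rfl⟩
      have hq' := hA q hq
      intro hd
      have hdvd : ((1 / (q : ℚ)).den : ℤ) ∣ (q : ℤ) := by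
        have : (1 / (q : ℚ)) = Rat.divInt 1 (q : ℤ) := by
          rw [Rat.divInt_eq_div]; push_cast; ring
        rw [this]
        exact Rat.den_dvd 1 q
      have : p ∣ q := by
        exact_mod_cast dvd_trans (Int.natCast_dvd_natCast.mpr hd) hdvd
      have : p = q := (Nat.prime_dvd_prime_iff_eq hp hq').mp this
      exact hpA (this ▸ hq)
    have : ¬ p ∣ (1 / (p : ℚ)).den := hHS hmemH
    apply this
    rw [one_div, Rat.inv_natCast_den_of_pos hp.pos]
  · intro hpA
    exact Ideal.subset_span ⟨p, hpA, rfl⟩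
end

section
/- Let K be a field, let ι : MvPolynomial (Fin n) K →+* AddMonoidAlgebra K (Fin n → ℤ) be the ring homomorphism sending each monomial with exponent vector α ∈ ℕⁿ and coefficient c to single (↑α) c, and let g, f₁, …, f_k ∈ MvPolynomial (Fin n) K. Then ι g belongs to the ideal of AddMonoidAlgebra K (Fin n → ℤ) generated by ι f₁, …, ι f_k if and only if there exists λ ∈ ℕ such that (∏ i, X i)^λ · g belongs to the ideal of MvPolynomial (Fin n) K generated by f₁, …, f_k. -/
open MvPolynomial AddMonoidAlgebra

section aux

variable {K : Type*} [Field K] {n : ℕ}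
  (ι : MvPolynomial (Fin n) K →+* AddMonoidAlgebra K (Fin n → ℤ))
  (hι : ∀ (α : Fin n →₀ ℕ) (c : K),
    ι (MvPolynomial.monomial α c) =
      AddMonoidAlgebra.single (fun i => (α i : ℤ)) c)

include hι

theorem stmt14_inj : Function.Injective ι := by
  rw [injective_iff_map_eq_zero]
  intro g hg
  ext α
  have he : Function.Injective (fun (β : Fin n →₀ ℕ) => (fun i => (β i : ℤ))) := by
    intro β γ h
    ext i
    exact Nat.cast_injective (congrFun h i)
  have h1 : ι g = ∑ β ∈ g.support, AddMonoidAlgebra.single (fun i => (β i : ℤ)) (g.coeff β) := by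
    conv_lhs => rw [(g.support_sum_monomial_coeff).symm]
    rw [map_sum]
    exact Finset.sum_congr rfl fun β _ => hι β _
  have h2 : (ι g).coeff (fun i => (α i : ℤ)) = g.coeff α := by
    rw [h1, AddMonoidAlgebra.coeff_sum, Finsupp.finset_sum_apply]
    rw [Finset.sum_eq_single α]
    · simp [AddMonoidAlgebra.coeff_single]
    · intro β _ hβ
      rw [AddMonoidAlgebra.coeff_single, Finsupp.single_apply_eq_zero]
      intro h; exact absurd (he h).symm hβ
    · intro h
      simp [AddMonoidAlgebra.coeff_single, MvPolynomial.notMem_support_iff.mp h]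
  rw [hg] at h2
  simpa using h2.symm

theorem stmt14_prod : ι (∏ i, MvPolynomial.X i) =
    AddMonoidAlgebra.single (fun _ => (1 : ℤ)) 1 := by
  rw [map_prod]
  have : ∀ i : Fin n, ι (MvPolynomial.X i) =
      AddMonoidAlgebra.single (fun j => ((Finsupp.single i 1 : Fin n →₀ ℕ) j : ℤ)) 1 := by
    intro i
    exact hι (Finsupp.single i 1) 1
  simp_rw [this]
  rw [AddMonoidAlgebra.prod_single]
  congr 1
  · funext j
    rw [Finset.sum_apply]
    simp [Finsupp.single_apply]
  · simp

theorem stmt14_pow (l : ℕ) : ι ((∏ i, MvPolynomial.X i) ^ l) =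
    AddMonoidAlgebra.single (fun _ => (l : ℤ)) 1 := by
  rw [map_pow, stmt14_prod ι hι, AddMonoidAlgebra.single_pow]
  congr 1
  · funext j; simp
  · simp

theorem stmt14_clear (c : AddMonoidAlgebra K (Fin n → ℤ)) :
    ∃ (l : ℕ) (p : MvPolynomial (Fin n) K),
      AddMonoidAlgebra.single (fun _ => (l : ℤ)) (1 : K) * c = ι p := by
  induction c using AddMonoidAlgebra.induction_linear with
  | zero => exact ⟨0, 0, by simp⟩
  | add c1 c2 ih1 ih2 =>
    obtain ⟨l1, p1, hp1⟩ := ih1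
    obtain ⟨l2, p2, hp2⟩ := ih2
    refine ⟨l1 + l2, (∏ i, MvPolynomial.X i) ^ l2 * p1
      + (∏ i, MvPolynomial.X i) ^ l1 * p2, ?_⟩
    have key : (AddMonoidAlgebra.single (fun _ : Fin n => ((l1 + l2 : ℕ) : ℤ)) (1 : K)) =
        AddMonoidAlgebra.single (fun _ => (l2 : ℤ)) 1 *
          AddMonoidAlgebra.single (fun _ => (l1 : ℤ)) 1 := by
      rw [AddMonoidAlgebra.single_mul_single, one_mul]
      congr 1
      funext j
      simp only [Pi.add_apply]
      push_cast
      ring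
    have key' : (AddMonoidAlgebra.single (fun _ : Fin n => ((l1 + l2 : ℕ) : ℤ)) (1 : K)) =
        AddMonoidAlgebra.single (fun _ => (l1 : ℤ)) 1 *
          AddMonoidAlgebra.single (fun _ => (l2 : ℤ)) 1 := by
      rw [key, mul_comm]
    have e1 : (AddMonoidAlgebra.single (fun _ : Fin n => ((l1 + l2 : ℕ) : ℤ)) (1 : K) : AddMonoidAlgebra K (Fin n → ℤ)) * (show AddMonoidAlgebra K (Fin n → ℤ) from c1)
        = ι ((∏ i, MvPolynomial.X i) ^ l2 * p1) := by
      rw [map_mul, stmt14_pow ι hι, key, mul_assoc, hp1]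
    have e2 : (AddMonoidAlgebra.single (fun _ : Fin n => ((l1 + l2 : ℕ) : ℤ)) (1 : K) : AddMonoidAlgebra K (Fin n → ℤ)) * (show AddMonoidAlgebra K (Fin n → ℤ) from c2)
        = ι ((∏ i, MvPolynomial.X i) ^ l1 * p2) := by
      rw [map_mul, stmt14_pow ι hι, key', mul_assoc, hp2]
    rw [mul_add, e1, e2, ← map_add]
  | single d a =>
    set l : ℕ := ∑ i, (d i).natAbs with hl
    have hle : ∀ i : Fin n, (0 : ℤ) ≤ (l : ℤ) + d i := by
      intro i
      have : (d i).natAbs ≤ l := Finset.single_le_sum (f := fun i => (d i).natAbs)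
        (fun _ _ => Nat.zero_le _) (Finset.mem_univ i)
      omega
    refine ⟨l, MvPolynomial.monomial
      (Finsupp.equivFunOnFinite.symm fun i => ((l : ℤ) + d i).toNat) a, ?_⟩
    rw [hι, AddMonoidAlgebra.single_mul_single, one_mul]
    congr 1
    funext i
    have : ((Finsupp.equivFunOnFinite.symm fun i => ((l : ℤ) + d i).toNat) i)
        = ((l : ℤ) + d i).toNat := rfl
    rw [this, Int.toNat_of_nonneg (hle i)]
    rfl

end aux

/-- Let `K` be a field and `ι : MvPolynomial (Fin n) K →+*
AddMonoidAlgebra K (Fin n → ℤ)` the ring homomorphism sending the monomial with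
exponent vector `α ∈ ℕⁿ` and coefficient `c` to `single ↑α c`. For polynomials
`g, f 1, …, f k`, the image `ι g` lies in the ideal of the Laurent polynomial
ring generated by the `ι (f i)` iff `(∏ i, X i)^λ * g` lies in the ideal of
`MvPolynomial (Fin n) K` generated by the `f i` for some `λ ∈ ℕ`. -/
theorem stmt_14 (K : Type*) [Field K] (n k : ℕ)
    (ι : MvPolynomial (Fin n) K →+* AddMonoidAlgebra K (Fin n → ℤ))
    (hι : ∀ (α : Fin n →₀ ℕ) (c : K),
      ι (MvPolynomial.monomial α c) =
        AddMonoidAlgebra.single (fun i => (α i : ℤ)) c)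
    (g : MvPolynomial (Fin n) K) (f : Fin k → MvPolynomial (Fin n) K) :
    ι g ∈ Ideal.span (Set.range fun i => ι (f i)) ↔
      ∃ l : ℕ, (∏ i, MvPolynomial.X i : MvPolynomial (Fin n) K) ^ l * g ∈
        Ideal.span (Set.range f) := by
  constructor
  · intro h
    obtain ⟨c, hc⟩ := Ideal.mem_span_range_iff_exists_fun.mp h
    choose l p hp using fun i => stmt14_clear ι hι (c i)
    set L : ℕ := ∑ i, l i with hL
    have hLi : ∀ i, l i ≤ L := fun i =>
      Finset.single_le_sum (f := l) (fun _ _ => Nat.zero_le _) (Finset.mem_univ i)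
    set q : Fin k → MvPolynomial (Fin n) K :=
      fun i => (∏ j, MvPolynomial.X j) ^ (L - l i) * p i with hq
    have hq' : ∀ i, AddMonoidAlgebra.single (fun _ => (L : ℤ)) (1 : K) * c i = ι (q i) := by
      intro i
      have key : (AddMonoidAlgebra.single (fun _ => (L : ℤ)) (1 : K)) =
          AddMonoidAlgebra.single (fun _ : Fin n => ((L - l i : ℕ) : ℤ)) 1 *
            AddMonoidAlgebra.single (fun _ => (l i : ℤ)) 1 := by
        rw [AddMonoidAlgebra.single_mul_single, one_mul]
        congr 1
        funext j
        have hsub : (L - l i) + l i = L := Nat.sub_add_cancel (hLi i)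
        simp only [Pi.add_apply]
        omega
      rw [key, mul_assoc, hp i, hq, map_mul, stmt14_pow ι hι]
    have main : ι ((∏ j, MvPolynomial.X j) ^ L * g) = ι (∑ i, q i * f i) := by
      rw [map_mul, stmt14_pow ι hι, ← hc, Finset.mul_sum, map_sum]
      refine Finset.sum_congr rfl fun i _ => ?_
      rw [← mul_assoc, hq' i, ← map_mul]
    have := stmt14_inj ι hι main
    refine ⟨L, ?_⟩
    rw [this]
    exact Ideal.sum_mem _ fun i _ => Ideal.mul_mem_left _ _
      (Ideal.subset_span (Set.mem_range_self i))
  · rintro ⟨l, h⟩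
    have h1 : ι ((∏ i, MvPolynomial.X i) ^ l * g) ∈
        Ideal.span (Set.range fun i => ι (f i)) := by
      have := Ideal.mem_map_of_mem ι h
      rwa [Ideal.map_span, ← Set.range_comp] at this
    have h2 : ι g = AddMonoidAlgebra.single (fun _ => (-l : ℤ)) (1 : K) *
        ι ((∏ i, MvPolynomial.X i) ^ l * g) := by
      rw [map_mul, stmt14_pow ι hι, ← mul_assoc, AddMonoidAlgebra.single_mul_single]
      have : (fun _ : Fin n => (-l : ℤ)) + (fun _ => (l : ℤ)) = 0 := by
        funext j; simp
      rw [this, one_mul]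
      have : (AddMonoidAlgebra.single (0 : Fin n → ℤ) (1 : K)) = 1 := rfl
      rw [this, one_mul]
    rw [h2]
    exact Ideal.mul_mem_left _ _ h1
end

section
/- Let K be a field, s a positive integer, and let D_s = { q : ℚ | s·q ∈ ℤ } (rationals with denominator dividing s). Let g, f₁, …, f_m ∈ AddMonoidAlgebra K ℚ all have support contained in D_s. If g lies in the ideal of AddMonoidAlgebra K ℚ generated by f₁, …, f_m, then there exist h₁, …, h_m ∈ AddMonoidAlgebra K ℚ, each with support contained in D_s, such that g = h₁·f₁ + ⋯ + h_m·f_m. -/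
open Finsupp in
lemma filter_mul_aux {K : Type*} [Field K] (P : ℚ → Prop) [DecidablePred P]
    (hP : ∀ a b : ℚ, P b → (P (a + b) ↔ P a))
    (x y : AddMonoidAlgebra K ℚ) (hy : ∀ q, y.coeff q ≠ 0 → P q) :
    Finsupp.filter P (x * y).coeff =
      (AddMonoidAlgebra.ofCoeff (Finsupp.filter P x.coeff) * y).coeff := by
  induction x using AddMonoidAlgebra.induction_linear with
  | zero => simp [Finsupp.filter_zero]
  | add a b ha hb =>
      simp only [add_mul, AddMonoidAlgebra.coeff_add, Finsupp.filter_add,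
        AddMonoidAlgebra.ofCoeff_add, ha, hb]
  | single a c =>
      ext q
      rw [Finsupp.filter_apply, AddMonoidAlgebra.coeff_single]
      by_cases hPa : P a
      · rw [Finsupp.filter_single_of_pos _ hPa, AddMonoidAlgebra.ofCoeff_single]
        split_ifs with hq
        · rfl
        · rw [AddMonoidAlgebra.coeff_single_mul_apply]
          by_cases hy0 : y.coeff (-a + q) = 0
          · simp [hy0]
          · exfalso
            apply hq
            have := (hP a (-a + q) (hy _ hy0)).2 hPa
            simpa using this
      · rw [Finsupp.filter_single_of_neg _ hPa, AddMonoidAlgebra.ofCoeff_zero, zero_mul,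
          AddMonoidAlgebra.coeff_zero, Finsupp.zero_apply]
        split_ifs with hq
        · rw [AddMonoidAlgebra.coeff_single_mul_apply]
          by_cases hy0 : y.coeff (-a + q) = 0
          · simp [hy0]
          · exfalso
            exact hPa ((hP a _ (hy _ hy0)).1 (by simpa using hq))
        · rfl

/-- Let `K` be a field, `s` a positive integer, and
`D_s = { q : ℚ | s·q ∈ ℤ }`. If `g, f 1, …, f m ∈ AddMonoidAlgebra K ℚ` all
have support contained in `D_s` and `g` lies in the ideal generated by the
`f i`, then `g = ∑ i, h i * f i` for some `h i` whose supports are also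
contained in `D_s`. -/
theorem stmt_15 (K : Type*) [Field K] (s : ℕ) (hs : 0 < s)
    (m : ℕ) (g : AddMonoidAlgebra K ℚ) (f : Fin m → AddMonoidAlgebra K ℚ)
    (hg : ∀ q ∈ g.coeff.support, ∃ z : ℤ, (s : ℚ) * q = z)
    (hf : ∀ i, ∀ q ∈ (f i).coeff.support, ∃ z : ℤ, (s : ℚ) * q = z)
    (hmem : g ∈ Ideal.span (Set.range f)) :
    ∃ h : Fin m → AddMonoidAlgebra K ℚ,
      (∀ i, ∀ q ∈ (h i).coeff.support, ∃ z : ℤ, (s : ℚ) * q = z) ∧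
      g = ∑ i, h i * f i := by
  classical
  set P : ℚ → Prop := fun q => ∃ z : ℤ, (s : ℚ) * q = z with hPdef
  have hP : ∀ a b : ℚ, P b → (P (a + b) ↔ P a) := by
    rintro a b ⟨z, hz⟩
    constructor
    · rintro ⟨w, hw⟩
      exact ⟨w - z, by push_cast; rw [← hw, ← hz]; ring⟩
    · rintro ⟨w, hw⟩
      exact ⟨w + z, by push_cast; rw [← hw, ← hz]; ring⟩
  rw [Ideal.span, Submodule.mem_span_range_iff_exists_fun] at hmem
  obtain ⟨c, hc⟩ := hmem
  refine ⟨fun i => AddMonoidAlgebra.ofCoeff (Finsupp.filter P (c i).coeff), ?_, ?_⟩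
  · intro i q hq
    rw [AddMonoidAlgebra.coeff_ofCoeff, Finsupp.support_filter, Finset.mem_filter] at hq
    exact hq.2
  · apply AddMonoidAlgebra.coeff_injective
    have hgfilter : Finsupp.filter P g.coeff = g.coeff :=
      (Finsupp.filter_eq_self_iff _ _).2 fun q hq =>
        hg q (Finsupp.mem_support_iff.2 hq)
    calc g.coeff = Finsupp.filter P g.coeff := hgfilter.symm
      _ = Finsupp.filter P (∑ i, c i * f i).coeff := by
          rw [← hc]; simp [smul_eq_mul]
      _ = ∑ i, Finsupp.filter P (c i * f i).coeff := by
          rw [AddMonoidAlgebra.coeff_sum]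
          exact Finsupp.filter_sum Finset.univ _
      _ = (∑ i, AddMonoidAlgebra.ofCoeff (Finsupp.filter P (c i).coeff) * f i).coeff := by
          rw [AddMonoidAlgebra.coeff_sum]
          refine Finset.sum_congr rfl fun i _ => ?_
          exact filter_mul_aux P hP (c i) (f i)
            fun q hq => hf i q (Finsupp.mem_support_iff.2 hq)
end

section
/- Let K be a field. Then every finitely generated ideal of the group algebra AddMonoidAlgebra K ℚ is principal; that is, AddMonoidAlgebra K ℚ is a Bézout ring. -/
open AddMonoidAlgebra Polynomial LaurentPolynomial Ideal

/-- The additive hom `ℤ →+ ℚ` sending `k` to `k / n`. -/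
noncomputable def divAddHom (n : ℕ) : ℤ →+ ℚ where
  toFun k := (k : ℚ) / n
  map_zero' := by simp
  map_add' a b := by push_cast; ring

lemma divAddHom_fix {n : ℕ} (hn : n ≠ 0) {q : ℚ} (hq : (q.den : ℕ) ∣ n) :
    divAddHom n (q.num * ((n / q.den : ℕ) : ℤ)) = q := by
  obtain ⟨c, hc⟩ := hq
  have hd : (q.den : ℕ) ≠ 0 := q.den_nz
  have hc' : n / q.den = c := by rw [hc]; exact Nat.mul_div_cancel_left _ (Nat.pos_of_ne_zero hd)
  have hcK : (c : ℚ) ≠ 0 := by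
    intro h
    exact hn (by rw [hc, Nat.cast_eq_zero.mp h, mul_zero])
  show ((q.num * ((n / q.den : ℕ) : ℤ) : ℤ) : ℚ) / n = q
  rw [hc', hc]
  push_cast
  rw [mul_div_mul_right _ _ hcK]
  exact Rat.num_div_den q

/-- Every element of `AddMonoidAlgebra K ℚ` supported on rationals with
denominator dividing `n` comes from `AddMonoidAlgebra K ℤ` via `divAddHom n`. -/
lemma exists_preimage {K : Type*} [Field K] {n : ℕ} (hn : n ≠ 0)
    (f : AddMonoidAlgebra K ℚ) (hf : ∀ q ∈ f.coeff.support, (q.den : ℕ) ∣ n) :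
    ∃ z : AddMonoidAlgebra K ℤ,
      AddMonoidAlgebra.mapDomainRingHom K (divAddHom n) z = f := by
  refine ⟨AddMonoidAlgebra.ofCoeff (Finsupp.mapDomain (fun q : ℚ => q.num * ((n / q.den : ℕ) : ℤ)) f.coeff), ?_⟩
  show AddMonoidAlgebra.ofCoeff (Finsupp.mapDomain (divAddHom n)
      (Finsupp.mapDomain (fun q : ℚ => q.num * ((n / q.den : ℕ) : ℤ)) f.coeff)) = f
  rw [← Finsupp.mapDomain_comp]
  have h : Finsupp.mapDomain (⇑(divAddHom n) ∘ fun q : ℚ => q.num * ((n / q.den : ℕ) : ℤ))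
      f.coeff = f.coeff :=
    (Finsupp.mapDomain_congr fun q hq => divAddHom_fix hn (hf q hq)).trans
      Finsupp.mapDomain_id
  rw [h]

/-- For a field `K`, every finitely generated ideal of
`AddMonoidAlgebra K ℚ` is principal, i.e. `AddMonoidAlgebra K ℚ` is a Bézout
ring. -/
theorem stmt_16 (K : Type*) [Field K] : IsBezout (AddMonoidAlgebra K ℚ) := by
  rw [IsBezout.iff_span_pair_isPrincipal]
  intro x y
  classical
  set n : ℕ := (x.coeff.support ∪ y.coeff.support).lcm (fun q => (q.den : ℕ)) with hn
  have hn0 : n ≠ 0 := by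
    intro h
    rw [hn, Finset.lcm_eq_zero_iff] at h
    obtain ⟨q, -, hq⟩ := h
    simp at hq
  obtain ⟨zx, hzx⟩ := exists_preimage hn0 x fun q hq =>
    Finset.dvd_lcm (Finset.mem_union_left _ hq)
  obtain ⟨zy, hzy⟩ := exists_preimage hn0 y fun q hq =>
    Finset.dvd_lcm (Finset.mem_union_right _ hq)
  set F : AddMonoidAlgebra K ℤ →+* AddMonoidAlgebra K ℚ :=
    AddMonoidAlgebra.mapDomainRingHom K (divAddHom n) with hF
  -- write zx, zy as unit times image of a polynomial
  obtain ⟨a, p, hp⟩ := LaurentPolynomial.exists_T_pow (R := K) zx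
  obtain ⟨b, q, hq⟩ := LaurentPolynomial.exists_T_pow (R := K) zy
  set H : K[X] →+* AddMonoidAlgebra K ℚ := F.comp Polynomial.toLaurent with hH
  have hTunit : ∀ m : ℤ, IsUnit (F (LaurentPolynomial.T m)) := fun m =>
    (LaurentPolynomial.isUnit_T m).map F
  have hx : x = H p * F (LaurentPolynomial.T (-(a : ℤ))) := by
    rw [hH, RingHom.comp_apply, hp, _root_.map_mul, mul_assoc, ← _root_.map_mul, ← T_add]
    simp [hzx]
  have hy : y = H q * F (LaurentPolynomial.T (-(b : ℤ))) := by
    rw [hH, RingHom.comp_apply, hq, _root_.map_mul, mul_assoc, ← _root_.map_mul, ← T_add]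
    simp [hzy]
  -- the span of the pair equals the image of a span in K[X]
  obtain ⟨d, hd⟩ := IsBezout.span_pair_isPrincipal p q
  refine ⟨H d, ?_⟩
  have : Ideal.span {x, y} = Ideal.span {H p, H q} := by
    rw [Ideal.span_insert, Ideal.span_insert, hx, hy,
      Ideal.span_singleton_mul_right_unit (hTunit _),
      Ideal.span_singleton_mul_right_unit (hTunit _)]
  rw [this]
  have : ({H p, H q} : Set (AddMonoidAlgebra K ℚ)) = H '' {p, q} := by
    simp [Set.image_insert_eq]
  have hd' : Ideal.span {p, q} = Ideal.span {d} := hd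
  rw [this, ← Ideal.map_span, hd', Ideal.map_span]
  simp
end

section
/- Let R be a commutative integral domain and let p ∈ R[X] be a polynomial not divisible by X (equivalently, with nonzero constant coefficient). Then p is irreducible in the polynomial ring R[X] if and only if its image toLaurent p is irreducible in the Laurent polynomial ring R[T;T⁻¹]. -/
open Polynomial LaurentPolynomial

/-- If `a * b = X ^ n` and `X ∤ a` then `a` is a unit. -/
private lemma aux_mul_eq_X_pow {R : Type*} [CommRing R] [IsDomain R] :
    ∀ (n : ℕ) (a b : R[X]), ¬ (X ∣ a) → a * b = X ^ n → IsUnit a := by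
  intro n
  induction n with
  | zero =>
    intro a b ha h
    rw [pow_zero] at h
    exact IsUnit.of_mul_eq_one b h
  | succ n ih =>
    intro a b ha h
    have hX : (X : R[X]) ∣ a * b := by
      rw [h]; exact dvd_pow_self _ (Nat.succ_ne_zero n)
    rcases (Polynomial.prime_X (R := R)).2.2 a b hX with h1 | h2
    · exact absurd h1 ha
    · obtain ⟨c, rfl⟩ := h2
      apply ih a c ha
      have hXne : (X : R[X]) ≠ 0 := X_ne_zero
      have : X * (a * c) = X * X ^ n := by
        rw [pow_succ] at h
        ring_nf
        ring_nf at h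
        linear_combination h
      exact mul_left_cancel₀ hXne this

/-- If `X ∤ a` and `toLaurent a` is a unit, then `a` is a unit. -/
private lemma aux_isUnit_of_toLaurent {R : Type*} [CommRing R] [IsDomain R]
    (a : R[X]) (ha : ¬ (X ∣ a)) (h : IsUnit (Polynomial.toLaurent a)) : IsUnit a := by
  obtain ⟨u, hu⟩ := h
  have h1 : Polynomial.toLaurent a * ↑u⁻¹ = 1 := by
    rw [← hu]; exact u.mul_inv
  obtain ⟨n, b, hb⟩ := exists_T_pow (R := R) (↑u⁻¹ : R[T;T⁻¹])
  have h2 : Polynomial.toLaurent (a * b) = Polynomial.toLaurent (X ^ n : R[X]) := by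
    rw [map_mul, hb, Polynomial.toLaurent_X_pow, ← mul_assoc, h1, one_mul]
  have h3 : a * b = X ^ n := Polynomial.toLaurent_injective h2
  exact aux_mul_eq_X_pow n a b ha h3

/-- Decompose a nonzero polynomial as `X ^ i * a'` with `X ∤ a'`. -/
private lemma aux_decomp {R : Type*} [CommRing R] [IsDomain R] (a : R[X]) (ha : a ≠ 0) :
    ∃ (i : ℕ) (a' : R[X]), a = X ^ i * a' ∧ ¬ (X ∣ a') := by
  obtain ⟨q, hq, hq'⟩ := Polynomial.exists_eq_pow_rootMultiplicity_mul_and_not_dvd a ha 0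
  rw [map_zero, sub_zero] at hq hq'
  exact ⟨_, q, hq, hq'⟩

open Polynomial LaurentPolynomial in
/-- Let `R` be a commutative integral domain and `p ∈ R[X]` a
polynomial not divisible by `X`. Then `p` is irreducible in `R[X]` iff its
image `toLaurent p` is irreducible in the Laurent polynomial ring `R[T;T⁻¹]`. -/
theorem stmt_17 (R : Type*) [CommRing R] [IsDomain R] (p : R[X])
    (hp : ¬ (X ∣ p)) :
    Irreducible p ↔ Irreducible (Polynomial.toLaurent p) := by
  have hp0 : p ≠ 0 := fun h => hp (h ▸ dvd_zero X)
  constructor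
  · -- forward
    intro hirr
    constructor
    · intro hu
      exact hirr.not_isUnit (aux_isUnit_of_toLaurent p hp hu)
    · intro a b hab
      -- clear denominators
      obtain ⟨m, a₁, ha₁⟩ := exists_T_pow (R := R) a
      obtain ⟨n, b₁, hb₁⟩ := exists_T_pow (R := R) b
      have key : Polynomial.toLaurent (a₁ * b₁) =
          Polynomial.toLaurent (p * X ^ (m + n)) := by
        rw [map_mul, ha₁, hb₁, map_mul, Polynomial.toLaurent_X_pow, hab]
        push_cast
        rw [T_add]
        ring
      have key' : a₁ * b₁ = p * X ^ (m + n) := Polynomial.toLaurent_injective key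
      have ha₁0 : a₁ ≠ 0 := by
        intro h
        rw [h, zero_mul] at key'
        exact (mul_ne_zero hp0 (pow_ne_zero _ X_ne_zero)) key'.symm
      have hb₁0 : b₁ ≠ 0 := by
        intro h
        rw [h, mul_zero] at key'
        exact (mul_ne_zero hp0 (pow_ne_zero _ X_ne_zero)) key'.symm
      obtain ⟨i, a₂, ha₂, ha₂'⟩ := aux_decomp a₁ ha₁0
      obtain ⟨j, b₂, hb₂, hb₂'⟩ := aux_decomp b₁ hb₁0
      -- X ^ (i+j) * (a₂ * b₂) = X ^ (m+n) * p, with X ∤ a₂*b₂ and X ∤ p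
      have heq : X ^ (i + j) * (a₂ * b₂) = X ^ (m + n) * p := by
        rw [pow_add]
        calc X ^ i * X ^ j * (a₂ * b₂) = (X ^ i * a₂) * (X ^ j * b₂) := by ring
          _ = p * X ^ (m + n) := by rw [← ha₂, ← hb₂, key']
          _ = X ^ (m + n) * p := mul_comm _ _
      have hXnd : ¬ (X ∣ a₂ * b₂) := by
        intro hd
        rcases (Polynomial.prime_X (R := R)).2.2 _ _ hd with h | h
        · exact ha₂' h
        · exact hb₂' h
      -- show i + j = m + n by comparing X-multiplicities, hence p = a₂ * b₂
      have hij : i + j = m + n ∧ a₂ * b₂ = p := by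
        rcases lt_trichotomy (i + j) (m + n) with h | h | h
        · exfalso
          obtain ⟨k, hk⟩ := Nat.exists_eq_add_of_lt h
          have heq2 : X ^ (i + j) * (a₂ * b₂) = X ^ (i + j) * (X ^ (k + 1) * p) := by
            rw [heq, hk]; ring
          have h3 := mul_left_cancel₀ (pow_ne_zero (i + j) (X_ne_zero (R := R))) heq2
          exact hXnd (h3 ▸ ⟨X ^ k * p, by ring⟩)
        · refine ⟨h, ?_⟩
          rw [h] at heq
          exact mul_left_cancel₀ (pow_ne_zero _ X_ne_zero) heq
        · exfalso
          obtain ⟨k, hk⟩ := Nat.exists_eq_add_of_lt h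
          have heq2 : X ^ (m + n) * p = X ^ (m + n) * (X ^ (k + 1) * (a₂ * b₂)) := by
            rw [← heq, hk]; ring
          have h3 := mul_left_cancel₀ (pow_ne_zero (m + n) (X_ne_zero (R := R))) heq2
          exact hp (h3 ▸ ⟨X ^ k * (a₂ * b₂), by ring⟩)
      have hpab : p = a₂ * b₂ := hij.2.symm
      rcases hirr.isUnit_or_isUnit hpab with h | h
      · left
        have haT : a = Polynomial.toLaurent a₂ * T ((i : ℤ) + -(m : ℤ)) := by
          have h1 : Polynomial.toLaurent a₁ * T (-(m : ℤ)) = a := by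
            rw [ha₁, mul_assoc, ← T_add]; simp
          rw [← h1, ha₂, map_mul, Polynomial.toLaurent_X_pow, T_add]; ring
        rw [haT]
        exact (h.map Polynomial.toLaurent).mul (isUnit_T _)
      · right
        have hbT : b = Polynomial.toLaurent b₂ * T ((j : ℤ) + -(n : ℤ)) := by
          have h1 : Polynomial.toLaurent b₁ * T (-(n : ℤ)) = b := by
            rw [hb₁, mul_assoc, ← T_add]; simp
          rw [← h1, hb₂, map_mul, Polynomial.toLaurent_X_pow, T_add]; ring
        rw [hbT]
        exact (h.map Polynomial.toLaurent).mul (isUnit_T _)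
  · -- backward
    intro hirr
    constructor
    · intro hu
      exact hirr.not_isUnit (IsUnit.map _ hu)
    · intro a b hab
      have : Polynomial.toLaurent p = Polynomial.toLaurent a * Polynomial.toLaurent b := by
        rw [← map_mul, hab]
      rcases hirr.isUnit_or_isUnit this with h | h
      · left
        have ha : ¬ (X ∣ a) := fun hd => hp (hab ▸ hd.mul_right b)
        exact aux_isUnit_of_toLaurent a ha h
      · right
        have hb : ¬ (X ∣ b) := fun hd => hp (hab ▸ hd.mul_left a)
        exact aux_isUnit_of_toLaurent b hb h
end

section
/- The element single (1:ℚ) (1:ℚ) + single (0:ℚ) (2:ℚ) (the posynomial x + 2) is irreducible (atomic) in the group algebra AddMonoidAlgebra ℚ ℚ. -/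
open Polynomial in
lemma stmt18_aux_int (n : ℕ) (hn : 0 < n) : Irreducible ((X : ℤ[X])^n + C 2) := by
  have hmonic : ((X : ℤ[X])^n + C 2).Monic := monic_X_pow_add_C _ hn.ne'
  have hdeg : ((X : ℤ[X])^n + C 2).degree = (n : WithBot ℕ) := by
    rw [degree_eq_natDegree hmonic.ne_zero, natDegree_X_pow_add_C]
  refine irreducible_of_eisenstein_criterion
    ((Ideal.span_singleton_prime (two_ne_zero)).mpr Int.prime_two) ?_ ?_ ?_ ?_ ?_
  · rw [hmonic.leadingCoeff, Ideal.mem_span_singleton]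
    norm_num
  · intro i hi
    rw [hdeg] at hi
    have hi' : i < n := by exact_mod_cast hi
    rw [coeff_add, coeff_X_pow, if_neg hi'.ne, coeff_C]
    split <;> simp [Ideal.mem_span_singleton]
  · rw [hdeg]; exact_mod_cast hn
  · rw [coeff_add, coeff_X_pow, if_neg hn.ne, coeff_C, if_pos rfl, Ideal.span_singleton_pow,
      Ideal.mem_span_singleton]
    norm_num
  · exact hmonic.isPrimitive

open Polynomial in
lemma stmt18_aux_rat (n : ℕ) (hn : 0 < n) : Irreducible ((X : ℚ[X])^n + C 2) := by
  have h := (Polynomial.IsPrimitive.Int.irreducible_iff_irreducible_map_cast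
    (monic_X_pow_add_C (2:ℤ) hn.ne').isPrimitive).mp (stmt18_aux_int n hn)
  have h2 : (C 2 : ℚ[X]) = 2 := map_ofNat C 2
  rw [h2]
  simpa using h

open Polynomial in
lemma stmt18_aux_ama (n : ℕ) (hn : 0 < n) :
    Irreducible (AddMonoidAlgebra.single n (1:ℚ) + AddMonoidAlgebra.single 0 (2:ℚ) :
      AddMonoidAlgebra ℚ ℕ) := by
  have h := (stmt18_aux_rat n hn).map (Polynomial.toFinsuppIso ℚ)
  have heq : (Polynomial.toFinsuppIso ℚ) ((X:ℚ[X])^n + C 2) =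
      AddMonoidAlgebra.single n (1:ℚ) + AddMonoidAlgebra.single 0 (2:ℚ) := by
    have hc : (C 2 : ℚ[X]) = monomial 0 2 := by rw [← C_mul_X_pow_eq_monomial]; simp
    rw [X_pow_eq_monomial, hc, map_add, toFinsuppIso_apply, toFinsuppIso_apply,
      toFinsupp_monomial, toFinsupp_monomial]
  rwa [heq] at h

open Polynomial in
lemma stmt18_unit_ama {F : AddMonoidAlgebra ℚ ℕ} (h : IsUnit F) :
    ∃ c : ℚ, F = AddMonoidAlgebra.single 0 c := by
  have h2 : IsUnit ((Polynomial.toFinsuppIso ℚ).symm F) := h.map _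
  obtain ⟨r, -, hr⟩ := Polynomial.isUnit_iff.1 h2
  refine ⟨r, ?_⟩
  have hF : F = Polynomial.toFinsuppIso ℚ (C r) := by
    rw [hr]; simp
  have hc : (C r : ℚ[X]) = monomial 0 r := by rw [← C_mul_X_pow_eq_monomial]; simp
  rw [hF, toFinsuppIso_apply, hc, toFinsupp_monomial]

open Finsupp in
lemma stmt18_mul_apply_maxmax (p q : AddMonoidAlgebra ℚ ℚ) (hp : p.coeff.support.Nonempty)
    (hq : q.coeff.support.Nonempty) :
    (p * q).coeff (p.coeff.support.max' hp + q.coeff.support.max' hq) =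
      p.coeff (p.coeff.support.max' hp) * q.coeff (q.coeff.support.max' hq) := by
  classical
  set a := p.coeff.support.max' hp
  set b := q.coeff.support.max' hq
  rw [AddMonoidAlgebra.mul_apply]
  rw [Finsupp.sum, Finset.sum_eq_single a]
  · rw [Finsupp.sum, Finset.sum_eq_single b]
    · rw [if_pos rfl]
    · intro c hc hne
      exact if_neg fun he => hne (add_left_cancel he)
    · intro h
      rw [Finsupp.notMem_support_iff.1 h, mul_zero, if_pos rfl]
  · intro c hc hne
    apply Finset.sum_eq_zero
    intro d hd
    refine if_neg fun he => ?_
    have h1 : c < a := lt_of_le_of_ne (Finset.le_max' _ _ hc) hne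
    have h2 : d ≤ b := Finset.le_max' _ _ hd
    exact (add_lt_add_of_lt_of_le h1 h2).ne he
  · intro h
    exact absurd (Finset.max'_mem _ hp) h

open Finsupp in
lemma stmt18_mul_apply_minmin (p q : AddMonoidAlgebra ℚ ℚ) (hp : p.coeff.support.Nonempty)
    (hq : q.coeff.support.Nonempty) :
    (p * q).coeff (p.coeff.support.min' hp + q.coeff.support.min' hq) =
      p.coeff (p.coeff.support.min' hp) * q.coeff (q.coeff.support.min' hq) := by
  classical
  set a := p.coeff.support.min' hp
  set b := q.coeff.support.min' hq
  rw [AddMonoidAlgebra.mul_apply]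
  rw [Finsupp.sum, Finset.sum_eq_single a]
  · rw [Finsupp.sum, Finset.sum_eq_single b]
    · rw [if_pos rfl]
    · intro c hc hne
      exact if_neg fun he => hne (add_left_cancel he)
    · intro h
      rw [Finsupp.notMem_support_iff.1 h, mul_zero, if_pos rfl]
  · intro c hc hne
    apply Finset.sum_eq_zero
    intro d hd
    refine if_neg fun he => ?_
    have h1 : a < c := lt_of_le_of_ne (Finset.min'_le _ _ hc) (Ne.symm hne)
    have h2 : b ≤ d := Finset.min'_le _ _ hd
    exact (add_lt_add_of_lt_of_le h1 h2).ne' he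
  · intro h
    exact absurd (Finset.min'_mem _ hp) h

lemma stmt18_support_mul_max (p q : AddMonoidAlgebra ℚ ℚ) (hp : p.coeff.support.Nonempty)
    (hq : q.coeff.support.Nonempty) :
    p.coeff.support.max' hp + q.coeff.support.max' hq ∈ (p * q).coeff.support ∧
      ∀ y ∈ (p * q).coeff.support, y ≤ p.coeff.support.max' hp + q.coeff.support.max' hq := by
  classical
  constructor
  · rw [Finsupp.mem_support_iff, stmt18_mul_apply_maxmax p q hp hq]
    exact mul_ne_zero (Finsupp.mem_support_iff.1 (Finset.max'_mem _ hp))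
      (Finsupp.mem_support_iff.1 (Finset.max'_mem _ hq))
  · intro y hy
    obtain ⟨c, hc, d, hd, rfl⟩ := Finset.mem_add.1 (AddMonoidAlgebra.support_coeff_mul_subset p q hy)
    exact add_le_add (Finset.le_max' _ _ hc) (Finset.le_max' _ _ hd)

lemma stmt18_support_mul_min (p q : AddMonoidAlgebra ℚ ℚ) (hp : p.coeff.support.Nonempty)
    (hq : q.coeff.support.Nonempty) :
    p.coeff.support.min' hp + q.coeff.support.min' hq ∈ (p * q).coeff.support ∧
      ∀ y ∈ (p * q).coeff.support, p.coeff.support.min' hp + q.coeff.support.min' hq ≤ y := by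
  classical
  constructor
  · rw [Finsupp.mem_support_iff, stmt18_mul_apply_minmin p q hp hq]
    exact mul_ne_zero (Finsupp.mem_support_iff.1 (Finset.min'_mem _ hp))
      (Finsupp.mem_support_iff.1 (Finset.min'_mem _ hq))
  · intro y hy
    obtain ⟨c, hc, d, hd, rfl⟩ := Finset.mem_add.1 (AddMonoidAlgebra.support_coeff_mul_subset p q hy)
    exact add_le_add (Finset.min'_le _ _ hc) (Finset.min'_le _ _ hd)

lemma stmt18_isUnit_single (a : ℚ) {r : ℚ} (hr : r ≠ 0) :
    IsUnit (AddMonoidAlgebra.single a r : AddMonoidAlgebra ℚ ℚ) := by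
  apply IsUnit.of_mul_eq_one (AddMonoidAlgebra.single (-a) r⁻¹)
  rw [AddMonoidAlgebra.single_mul_single, add_neg_cancel, mul_inv_cancel₀ hr]
  rfl

lemma stmt18_factor_contra (f1 g1 : AddMonoidAlgebra ℚ ℚ)
    (hfg : f1 * g1 = AddMonoidAlgebra.single (1:ℚ) (1:ℚ) + AddMonoidAlgebra.single (0:ℚ) (2:ℚ))
    (hf0 : ∀ q ∈ f1.coeff.support, 0 ≤ q) (hg0 : ∀ q ∈ g1.coeff.support, 0 ≤ q)
    (hfs : ∃ q ∈ f1.coeff.support, q ≠ 0) (hgs : ∃ q ∈ g1.coeff.support, q ≠ 0) : False := by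
  classical
  set S : Finset ℚ := f1.coeff.support ∪ g1.coeff.support with hS
  set N : ℕ := ∏ q ∈ S, q.den with hNdef
  have hN : N ≠ 0 := Finset.prod_ne_zero_iff.mpr fun q _ => q.den_nz
  have hNQ : (N : ℚ) ≠ 0 := Nat.cast_ne_zero.mpr hN
  set dn : ℕ →+ ℚ :=
    { toFun := fun m => (m : ℚ) / N
      map_zero' := by simp
      map_add' := fun a b => by push_cast; ring } with hdn
  have hdnapp : ∀ m : ℕ, dn m = (m : ℚ) / N := fun m => rfl
  have hinj : Function.Injective dn := by
    intro m m' h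
    rw [hdnapp, hdnapp, div_eq_div_iff hNQ hNQ, mul_left_inj' hNQ] at h
    exact_mod_cast h
  have key : ∀ q : ℚ, 0 ≤ q → q ∈ S → ∃ m : ℕ, dn m = q := by
    intro q hq hqS
    obtain ⟨k, hk⟩ : (q.den : ℕ) ∣ N := Finset.dvd_prod_of_mem _ hqS
    have hk0 : (k : ℚ) ≠ 0 := by
      intro h0
      exact hN (by rw [hk, Nat.cast_eq_zero.mp h0, mul_zero])
    refine ⟨q.num.toNat * k, ?_⟩
    have hnum : ((q.num.toNat : ℕ) : ℚ) = (q.num : ℚ) := by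
      exact_mod_cast congrArg (Int.cast : ℤ → ℚ) (Int.toNat_of_nonneg (Rat.num_nonneg.2 hq))
    rw [hdnapp, hk]
    push_cast
    rw [mul_div_mul_right _ _ hk0, hnum, Rat.num_div_den]
  have hfr : ↑f1.coeff.support ⊆ Set.range dn := by
    intro q hq
    obtain ⟨m, hm⟩ := key q (hf0 q hq) (Finset.mem_union_left _ hq)
    exact ⟨m, hm⟩
  have hgr : ↑g1.coeff.support ⊆ Set.range dn := by
    intro q hq
    obtain ⟨m, hm⟩ := key q (hg0 q hq) (Finset.mem_union_right _ hq)
    exact ⟨m, hm⟩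
  set F : AddMonoidAlgebra ℚ ℕ := AddMonoidAlgebra.comapDomain dn hinj f1 with hFdef
  set G : AddMonoidAlgebra ℚ ℕ := AddMonoidAlgebra.comapDomain dn hinj g1 with hGdef
  have hF : AddMonoidAlgebra.mapDomain dn F = f1 := AddMonoidAlgebra.mapDomain_comapDomain hfr hinj
  have hG : AddMonoidAlgebra.mapDomain dn G = g1 := AddMonoidAlgebra.mapDomain_comapDomain hgr hinj
  set φ : AddMonoidAlgebra ℚ ℕ →+* AddMonoidAlgebra ℚ ℚ :=
    AddMonoidAlgebra.mapDomainRingHom ℚ dn with hφdef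
  have hφ : ∀ x : AddMonoidAlgebra ℚ ℕ, φ x = AddMonoidAlgebra.mapDomain dn x := fun _ => rfl
  have hinjφ : Function.Injective φ := by
    intro x y h
    rw [hφ, hφ] at h
    exact AddMonoidAlgebra.mapDomain_injective hinj h
  have hdnN : dn N = 1 := by rw [hdnapp, div_self hNQ]
  have hFG : F * G = AddMonoidAlgebra.single N (1:ℚ) + AddMonoidAlgebra.single 0 (2:ℚ) := by
    apply hinjφ
    rw [map_mul, map_add, hφ, hφ, hφ, hφ, hF, hG, hfg,
      AddMonoidAlgebra.mapDomain_single, AddMonoidAlgebra.mapDomain_single, hdnN, map_zero]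
  have hirr := stmt18_aux_ama N (Nat.pos_of_ne_zero hN)
  rcases hirr.isUnit_or_isUnit hFG.symm with hu | hu
  · obtain ⟨c, hc⟩ := stmt18_unit_ama hu
    obtain ⟨q, hq, hq0⟩ := hfs
    rw [hc, AddMonoidAlgebra.mapDomain_single, map_zero] at hF
    rw [← hF] at hq
    exact hq0 (Finset.mem_singleton.1 (Finsupp.support_single_subset hq))
  · obtain ⟨c, hc⟩ := stmt18_unit_ama hu
    obtain ⟨q, hq, hq0⟩ := hgs
    rw [hc, AddMonoidAlgebra.mapDomain_single, map_zero] at hG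
    rw [← hG] at hq
    exact hq0 (Finset.mem_singleton.1 (Finsupp.support_single_subset hq))

lemma stmt18_monomial_of_min_eq_max (f : AddMonoidAlgebra ℚ ℚ) (hf : f.coeff.support.Nonempty)
    (h : f.coeff.support.min' hf = f.coeff.support.max' hf) : IsUnit f := by
  set a := f.coeff.support.max' hf
  have hsub : f.coeff.support ⊆ {a} := by
    intro x hx
    rw [Finset.mem_singleton]
    exact le_antisymm (Finset.le_max' _ _ hx) (h ▸ Finset.min'_le _ _ hx)
  have hfa : f = AddMonoidAlgebra.single a (f.coeff a) :=
    AddMonoidAlgebra.ext ((Finsupp.eq_single_iff).2 ⟨hsub, rfl⟩)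
  have ha : f.coeff a ≠ 0 := Finsupp.mem_support_iff.1 (Finset.max'_mem _ hf)
  rw [hfa]
  exact stmt18_isUnit_single a ha

/-- The posynomial `x + 2`, i.e. the element
`single 1 1 + single 0 2` of the group algebra `AddMonoidAlgebra ℚ ℚ`, is
irreducible (atomic). -/
theorem stmt_18 :
    Irreducible (AddMonoidAlgebra.single (1 : ℚ) (1 : ℚ) +
      AddMonoidAlgebra.single (0 : ℚ) (2 : ℚ) : AddMonoidAlgebra ℚ ℚ) := by
  classical
  set p : AddMonoidAlgebra ℚ ℚ :=
    AddMonoidAlgebra.single (1 : ℚ) (1 : ℚ) + AddMonoidAlgebra.single (0 : ℚ) (2 : ℚ) with hp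
  have hsupp : p.coeff.support = {1, 0} := by
    rw [hp, AddMonoidAlgebra.coeff_add, AddMonoidAlgebra.coeff_single, AddMonoidAlgebra.coeff_single,
      Finsupp.support_add_eq]
    · rw [Finsupp.support_single_ne_zero _ (one_ne_zero), Finsupp.support_single_ne_zero _ (by norm_num : (2:ℚ) ≠ 0)]
      rfl
    · rw [Finsupp.support_single_ne_zero _ (one_ne_zero), Finsupp.support_single_ne_zero _ (by norm_num : (2:ℚ) ≠ 0)]
      simp
  have hpnon : p.coeff.support.Nonempty := by rw [hsupp]; exact ⟨1, by simp⟩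
  have hpmax : p.coeff.support.max' hpnon = 1 := by
    apply le_antisymm
    · apply Finset.max'_le
      intro y hy
      rw [hsupp] at hy
      rcases Finset.mem_insert.1 hy with rfl | hy
      · exact le_refl _
      · rw [Finset.mem_singleton.1 hy]; norm_num
    · exact Finset.le_max' _ _ (by rw [hsupp]; simp)
  have hpmin : p.coeff.support.min' hpnon = 0 := by
    apply le_antisymm
    · exact Finset.min'_le _ _ (by rw [hsupp]; simp)
    · apply Finset.le_min'
      intro y hy
      rw [hsupp] at hy
      rcases Finset.mem_insert.1 hy with rfl | hy
      · norm_num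
      · rw [Finset.mem_singleton.1 hy]
  have hpne : p ≠ 0 := by
    intro h
    have h1 : (1:ℚ) ∈ p.coeff.support := by rw [hsupp]; simp
    rw [h] at h1
    simp at h1
  constructor
  · -- p is not a unit
    rintro ⟨u, hu⟩
    have hq : (u : AddMonoidAlgebra ℚ ℚ) * ↑u⁻¹ = 1 := u.mul_inv
    have hqne : (↑u⁻¹ : AddMonoidAlgebra ℚ ℚ) ≠ 0 := by
      intro h
      rw [h, mul_zero] at hq
      exact one_ne_zero hq.symm
    have hqnon : (↑u⁻¹ : AddMonoidAlgebra ℚ ℚ).coeff.support.Nonempty :=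
      Finsupp.support_nonempty_iff.2 (AddMonoidAlgebra.coeff_eq_zero.not.2 hqne)
    have hpq : p * ↑u⁻¹ = 1 := by rw [hu] at hq; exact hq
    have h1supp : (1 : AddMonoidAlgebra ℚ ℚ).coeff.support = {0} := by
      rw [AddMonoidAlgebra.one_def]
      exact Finsupp.support_single_ne_zero _ one_ne_zero
    have hmax := (stmt18_support_mul_max p ↑u⁻¹ hpnon hqnon).1
    have hmin := (stmt18_support_mul_min p ↑u⁻¹ hpnon hqnon).1
    rw [hpq, h1supp, Finset.mem_singleton] at hmax hmin
    rw [hpmax] at hmax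
    rw [hpmin, zero_add] at hmin
    have hle := Finset.min'_le _ _ (Finset.max'_mem _ hqnon)
    rw [hmin] at hle
    have : (↑u⁻¹ : AddMonoidAlgebra ℚ ℚ).coeff.support.max' hqnon = -1 := by linarith
    rw [this] at hle
    linarith
  · -- factorization
    intro f g hfg
    by_contra hcon
    push_neg at hcon
    obtain ⟨hf, hg⟩ := hcon
    have hfne : f ≠ 0 := by rintro rfl; rw [zero_mul] at hfg; exact hpne hfg
    have hgne : g ≠ 0 := by rintro rfl; rw [mul_zero] at hfg; exact hpne hfg
    have hfnon : f.coeff.support.Nonempty := Finsupp.support_nonempty_iff.2 (AddMonoidAlgebra.coeff_eq_zero.not.2 hfne)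
    have hgnon : g.coeff.support.Nonempty := Finsupp.support_nonempty_iff.2 (AddMonoidAlgebra.coeff_eq_zero.not.2 hgne)
    set a' := f.coeff.support.min' hfnon
    set a := f.coeff.support.max' hfnon
    set b' := g.coeff.support.min' hgnon
    set b := g.coeff.support.max' hgnon
    have hfnm : a' ≠ a := fun h => hf (stmt18_monomial_of_min_eq_max f hfnon h)
    have hgnm : b' ≠ b := fun h => hg (stmt18_monomial_of_min_eq_max g hgnon h)
    have ha : a' < a := lt_of_le_of_ne (Finset.min'_le _ _ (Finset.max'_mem _ hfnon)) hfnm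
    have hb : b' < b := lt_of_le_of_ne (Finset.min'_le _ _ (Finset.max'_mem _ hgnon)) hgnm
    -- max and min of product
    have hmax := stmt18_support_mul_max f g hfnon hgnon
    have hmin := stmt18_support_mul_min f g hfnon hgnon
    rw [← hfg] at hmax hmin
    have hab1 : a + b = 1 := by
      rw [hsupp] at hmax
      have hle : (1:ℚ) ≤ a + b := hmax.2 1 (by simp)
      rcases Finset.mem_insert.1 hmax.1 with h | h
      · exact h
      · rw [Finset.mem_singleton.1 h] at hle; linarith
    have hab0 : a' + b' = 0 := by
      rw [hsupp] at hmin
      have hge : a' + b' ≤ 0 := hmin.2 0 (by simp)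
      rcases Finset.mem_insert.1 hmin.1 with h | h
      · rw [h] at hge; linarith
      · exact Finset.mem_singleton.1 h
    -- shift f and g
    set f1 : AddMonoidAlgebra ℚ ℚ := f * AddMonoidAlgebra.single (-a') 1 with hf1
    set g1 : AddMonoidAlgebra ℚ ℚ := g * AddMonoidAlgebra.single (-b') 1 with hg1
    have hone : ∀ y : ℚ, y * (1:ℚ) = 0 ↔ y = 0 := fun y => by rw [mul_one]
    have hf1supp : f1.coeff.support = f.coeff.support.map (addRightEmbedding (-a')) :=
      AddMonoidAlgebra.support_coeff_mul_single f 1 hone (-a')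
    have hg1supp : g1.coeff.support = g.coeff.support.map (addRightEmbedding (-b')) :=
      AddMonoidAlgebra.support_coeff_mul_single g 1 hone (-b')
    have hf1g1 : f1 * g1 = p := by
      rw [hf1, hg1, mul_mul_mul_comm, AddMonoidAlgebra.single_mul_single, mul_one, ← hfg]
      have : -a' + -b' = 0 := by linarith
      rw [this, ← AddMonoidAlgebra.one_def, mul_one]
    apply stmt18_factor_contra f1 g1 (by rw [hf1g1, hp])
    · intro q hq
      rw [hf1supp] at hq
      obtain ⟨x, hx, rfl⟩ := Finset.mem_map.1 hq
      have : a' ≤ x := Finset.min'_le _ _ hx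
      simp only [addRightEmbedding_apply]
      linarith
    · intro q hq
      rw [hg1supp] at hq
      obtain ⟨x, hx, rfl⟩ := Finset.mem_map.1 hq
      have : b' ≤ x := Finset.min'_le _ _ hx
      simp only [addRightEmbedding_apply]
      linarith
    · refine ⟨a + -a', ?_, by linarith⟩
      rw [hf1supp]
      exact Finset.mem_map.2 ⟨a, Finset.max'_mem _ hfnon, rfl⟩
    · refine ⟨b + -b', ?_, by linarith⟩
      rw [hg1supp]
      exact Finset.mem_map.2 ⟨b, Finset.max'_mem _ hgnon, rfl⟩
end

section
/- The group algebras AddMonoidAlgebra ℝ ℚ and AddMonoidAlgebra ℂ ℚ contain no irreducible (atomic) elements: for every f in AddMonoidAlgebra ℝ ℚ, f is not irreducible, and for every g in AddMonoidAlgebra ℂ ℚ, g is not irreducible. -/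
namespace Stmt19Aux
open Finsupp Polynomial


variable {K : Type*} [Field K]

lemma isUnit_single (q : ℚ) {r : K} (hr : r ≠ 0) :
    IsUnit (AddMonoidAlgebra.single q r) := by
  refine isUnit_iff_exists_inv.mpr ⟨AddMonoidAlgebra.single (-q) r⁻¹, ?_⟩
  rw [AddMonoidAlgebra.single_mul_single, add_neg_cancel, mul_inv_cancel₀ hr,
    ← AddMonoidAlgebra.one_def]

lemma support_singleton_of_isUnit {f : AddMonoidAlgebra K ℚ} (hf : IsUnit f) :
    ∃ q : ℚ, f.coeff.support = {q} := by
  obtain ⟨g, hfg⟩ := isUnit_iff_exists_inv.mp hf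
  have hf0 : f ≠ 0 := by rintro rfl; simp at hfg
  have hg0 : g ≠ 0 := by rintro rfl; simp at hfg
  have hfs : f.coeff.support.Nonempty :=
    Finsupp.support_nonempty_iff.mpr (AddMonoidAlgebra.coeff_eq_zero.not.mpr hf0)
  have hgs : g.coeff.support.Nonempty :=
    Finsupp.support_nonempty_iff.mpr (AddMonoidAlgebra.coeff_eq_zero.not.mpr hg0)
  have key : ∀ a ∈ f.coeff.support, ∀ b ∈ g.coeff.support,
      (∀ x ∈ f.coeff.support, ∀ y ∈ g.coeff.support, x + y = a + b → x = a ∧ y = b) → a + b = 0 := by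
    intro a ha b hb huniq
    have h1 : (f * g).coeff (a + b) = f.coeff a * g.coeff b :=
      AddMonoidAlgebra.coeff_mul_add_of_uniqueAdd (@fun x y hx hy hxy => huniq x hx y hy hxy)
    have h2 : f.coeff a * g.coeff b ≠ 0 :=
      mul_ne_zero (Finsupp.mem_support_iff.mp ha) (Finsupp.mem_support_iff.mp hb)
    rw [hfg] at h1
    by_contra hab
    rw [show ((1 : AddMonoidAlgebra K ℚ).coeff (a+b)) = 0 by
      rw [AddMonoidAlgebra.one_def, AddMonoidAlgebra.coeff_single, Finsupp.single_apply, if_neg (fun h => hab h.symm)]] at h1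
    exact h2 h1.symm
  have hmax : f.coeff.support.max' hfs + g.coeff.support.max' hgs = 0 := by
    refine key _ (Finset.max'_mem _ _) _ (Finset.max'_mem _ _) ?_
    intro x hx y hy hxy
    have hx' := Finset.le_max' _ x hx
    have hy' := Finset.le_max' _ y hy
    constructor <;> [skip; skip] <;> by_contra h <;>
      [exact absurd hxy (by have := lt_of_le_of_ne hx' h; linarith);
       exact absurd hxy (by have := lt_of_le_of_ne hy' h; linarith)]
  have hmin : f.coeff.support.min' hfs + g.coeff.support.min' hgs = 0 := by
    refine key _ (Finset.min'_mem _ _) _ (Finset.min'_mem _ _) ?_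
    intro x hx y hy hxy
    have hx' := Finset.min'_le _ x hx
    have hy' := Finset.min'_le _ y hy
    constructor <;> by_contra h
    · exact absurd hxy (by have := lt_of_le_of_ne hx' (Ne.symm h); linarith)
    · exact absurd hxy (by have := lt_of_le_of_ne hy' (Ne.symm h); linarith)
  have heq : f.coeff.support.min' hfs = f.coeff.support.max' hfs := by
    have h1 := Finset.min'_le _ _ (Finset.max'_mem f.coeff.support hfs)
    have h2 := Finset.min'_le _ _ (Finset.max'_mem g.coeff.support hgs)
    linarith
  refine ⟨f.coeff.support.max' hfs, Finset.eq_singleton_iff_unique_mem.mpr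
    ⟨Finset.max'_mem _ _, fun x hx => le_antisymm (Finset.le_max' _ x hx)
      (heq ▸ Finset.min'_le _ x hx)⟩⟩


section Poly
open Polynomial


lemma pos_natDegree_of_not_isUnit {K : Type*} [Field K] {a : K[X]} (ha : a ≠ 0)
    (hu : ¬ IsUnit a) : 0 < a.natDegree := by
  rcases Nat.eq_zero_or_pos a.natDegree with h | h
  · obtain ⟨c, rfl⟩ := Polynomial.natDegree_eq_zero.mp h
    exact absurd (isUnit_C.mpr (isUnit_iff_ne_zero.mpr (by simpa using ha))) hu
  · exact h

lemma real_fac : ∀ p : ℝ[X], 3 ≤ p.natDegree →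
    ∃ u v : ℝ[X], p = u * v ∧ 0 < u.natDegree ∧ 0 < v.natDegree := by
  intro p hp
  have hp0 : p ≠ 0 := fun h => by simp [h] at hp
  have hpu : ¬ IsUnit p := by
    intro h
    have := Polynomial.natDegree_eq_zero_of_isUnit h
    omega
  have hnirr : ¬ Irreducible p := by
    intro h
    have := h.natDegree_le_two
    omega
  rw [irreducible_iff] at hnirr
  push_neg at hnirr
  obtain ⟨u, v, huv, hu, hv⟩ := hnirr hpu
  have hu0 : u ≠ 0 := fun h => hp0 (by simp [huv, h])
  have hv0 : v ≠ 0 := fun h => hp0 (by simp [huv, h])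
  exact ⟨u, v, huv, pos_natDegree_of_not_isUnit hu0 hu, pos_natDegree_of_not_isUnit hv0 hv⟩

lemma complex_fac : ∀ p : ℂ[X], 3 ≤ p.natDegree →
    ∃ u v : ℂ[X], p = u * v ∧ 0 < u.natDegree ∧ 0 < v.natDegree := by
  intro p hp
  have hp0 : p ≠ 0 := fun h => by simp [h] at hp
  have hdeg : 0 < p.degree := by
    rw [Polynomial.natDegree_pos_iff_degree_pos.symm]; omega
  obtain ⟨z, hz⟩ := Complex.exists_root hdeg
  obtain ⟨q, hq⟩ := (Polynomial.dvd_iff_isRoot.mpr hz)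
  have hq0 : q ≠ 0 := fun h => hp0 (by simp [hq, h])
  have hXz : (X - C z) ≠ 0 := Polynomial.X_sub_C_ne_zero z
  have hnd : p.natDegree = 1 + q.natDegree := by
    rw [hq, Polynomial.natDegree_mul hXz hq0, Polynomial.natDegree_X_sub_C]
  exact ⟨X - C z, q, hq, by rw [Polynomial.natDegree_X_sub_C]; omega, by omega⟩

end Poly

open Finsupp Polynomial

variable {K : Type*} [Field K]
lemma not_irreducible_aux
    (Hfac : ∀ p : K[X], 3 ≤ p.natDegree →
      ∃ u v : K[X], p = u * v ∧ 0 < u.natDegree ∧ 0 < v.natDegree)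
    (f : AddMonoidAlgebra K ℚ) : ¬ Irreducible f := by
  intro hirr
  have hf0 : f ≠ 0 := hirr.ne_zero
  have hfs : f.coeff.support.Nonempty :=
    Finsupp.support_nonempty_iff.mpr (AddMonoidAlgebra.coeff_eq_zero.not.mpr hf0)
  set m := f.coeff.support.min' hfs with hm
  set f' : AddMonoidAlgebra K ℚ := AddMonoidAlgebra.single (-m) 1 * f with hf'def
  -- f' is irreducible
  have hunit : IsUnit (AddMonoidAlgebra.single (-m) (1 : K)) :=
    isUnit_single (-m) one_ne_zero
  have hirr' : Irreducible f' := by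
    refine Associated.irreducible ⟨hunit.unit, ?_⟩ hirr
    rw [IsUnit.unit_spec, mul_comm]
  -- coefficients of f'
  have hf'app : ∀ y : ℚ, f'.coeff y = f.coeff (m + y) := by
    intro y
    rw [hf'def]
    convert AddMonoidAlgebra.coeff_single_mul_add f (1 : K) (-m) (m + y) using 2 <;> simp
  have h0supp : (0 : ℚ) ∈ f'.coeff.support := by
    rw [Finsupp.mem_support_iff, hf'app, add_zero]
    exact Finsupp.mem_support_iff.mp (f.coeff.support.min'_mem hfs)
  have hnonneg : ∀ q ∈ f'.coeff.support, 0 ≤ q := by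
    intro q hq
    rw [Finsupp.mem_support_iff, hf'app] at hq
    have := f.coeff.support.min'_le _ (Finsupp.mem_support_iff.mpr hq)
    rw [← hm] at this
    linarith
  -- denominators
  set D : ℕ := ∏ q ∈ f'.coeff.support, q.den with hD
  have hDpos : 0 < D := Finset.prod_pos fun q _ => q.pos
  set N : ℕ := 3 * D with hN
  have hNQ : (N : ℚ) ≠ 0 := by positivity
  -- the additive hom and the exponent-compression map
  set g : ℕ →+ ℚ := AddMonoidHom.mk' (fun n => (n : ℚ) / N) (by intro a b; push_cast; ring)
    with hg
  have hgapp : ∀ n : ℕ, g n = (n : ℚ) / N := fun n => rfl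
  have hginj : Function.Injective g := by
    intro a b hab
    rw [hgapp, hgapp, div_eq_div_iff hNQ hNQ] at hab
    exact_mod_cast mul_right_cancel₀ hNQ hab
  set g' : ℚ → ℕ := fun q => (q * N).num.toNat with hg'
  have hkey : ∀ q ∈ f'.coeff.support, ∃ z : ℕ, ((q * D : ℚ) = z) ∧ g' q = 3 * z ∧
      ((g' q : ℚ) = q * N) := by
    intro q hq
    obtain ⟨t, ht⟩ := Finset.dvd_prod_of_mem (fun q : ℚ => q.den) hq
    have h0 : 0 ≤ q := hnonneg q hq
    have hqd : q * (q.den : ℚ) = (q.num : ℚ) := Rat.mul_den_eq_num q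
    have hnum : ((q.num.toNat : ℤ)) = q.num := Int.toNat_of_nonneg (Rat.num_nonneg.mpr h0)
    have h1 : (q * D : ℚ) = ((q.num.toNat * t : ℕ) : ℚ) := by
      have hDt : (D : ℚ) = (q.den : ℚ) * t := by rw [hD, ht]; push_cast; ring
      have hnum' : ((q.num.toNat : ℚ)) = (q.num : ℚ) := by exact_mod_cast hnum
      rw [hDt, ← mul_assoc, hqd]
      push_cast
      rw [hnum']
    have h2 : (q * N : ℚ) = ((3 * (q.num.toNat * t) : ℕ) : ℚ) := by
      have : q * (N : ℚ) = 3 * (q * D) := by rw [hN]; push_cast; ring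
      rw [this, h1]; push_cast; ring
    have h3 : g' q = 3 * (q.num.toNat * t) := by
      rw [hg']
      simp only [h2, Rat.num_natCast, Int.toNat_natCast]
    exact ⟨q.num.toNat * t, h1, h3, by rw [h3, ← h2]⟩
  have hgg' : ∀ q ∈ f'.coeff.support, g (g' q) = q := by
    intro q hq
    obtain ⟨z, -, -, hval⟩ := hkey q hq
    rw [hgapp, hval, mul_div_assoc, div_self hNQ, mul_one]
  have hinjOn : Set.InjOn g' ↑f'.coeff.support := by
    intro a ha b hb hab
    rw [← hgg' a ha, ← hgg' b hb, hab]
  -- the polynomial p with F p = f'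
  set p : K[X] := ⟨⟨Finsupp.mapDomain g' f'.coeff⟩⟩ with hp
  have hpcoeff : ∀ q ∈ f'.coeff.support, p.coeff (g' q) = f'.coeff q := by
    intro q hq
    rw [hp, Polynomial.coeff_ofFinsupp]
    exact Finsupp.mapDomain_apply' ↑f'.coeff.support f'.coeff subset_rfl hinjOn hq
  set F : K[X] →+* AddMonoidAlgebra K ℚ :=
    (AddMonoidAlgebra.mapDomainRingHom K g).comp (Polynomial.toFinsuppIso K) with hF
  have hFapp : ∀ w : K[X], (F w).coeff = Finsupp.mapDomain g w.toFinsupp.coeff := by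
    intro w
    rw [hF]
    rfl
  have hFp : F p = f' := by
    apply AddMonoidAlgebra.coeff_injective
    rw [hFapp, hp]
    show Finsupp.mapDomain (⇑g) (Finsupp.mapDomain g' f'.coeff) = f'.coeff
    rw [← Finsupp.mapDomain_comp]
    simp only [Function.comp_def]
    rw [Finsupp.mapDomain_congr (g := id) (fun x hx => hgg' x hx), Finsupp.mapDomain_id]
  -- coeff 0 of p
  have hg'0 : g' 0 = 0 := by rw [hg']; simp
  have hp0 : p.coeff 0 ≠ 0 := by
    have := hpcoeff 0 h0supp
    rw [hg'0] at this
    rw [this]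
    exact Finsupp.mem_support_iff.mp h0supp
  -- a positive exponent in the support of f'
  have hq0 : ∃ q₀ ∈ f'.coeff.support, 0 < q₀ := by
    by_contra h
    push_neg at h
    have hsub : f'.coeff.support ⊆ {0} := by
      intro q hq
      have := le_antisymm (h q hq) (hnonneg q hq)
      simp [this]
    have : f' = AddMonoidAlgebra.single 0 (f'.coeff 0) :=
      AddMonoidAlgebra.coeff_injective (Finsupp.support_subset_singleton.mp hsub)
    exact hirr'.not_isUnit (this ▸ isUnit_single 0 (Finsupp.mem_support_iff.mp h0supp))
  obtain ⟨q₀, hq₀mem, hq₀pos⟩ := hq0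
  have hdeg3 : 3 ≤ p.natDegree := by
    obtain ⟨z, hz1, hz2, -⟩ := hkey q₀ hq₀mem
    have hzpos : 0 < z := by
      by_contra h
      push_neg at h
      interval_cases z
      rw [Nat.cast_zero] at hz1
      have : (0:ℚ) < q₀ * D := by positivity
      rw [hz1] at this
      exact lt_irrefl _ this
    have h3 : 3 ≤ g' q₀ := by omega
    refine le_trans h3 (Polynomial.le_natDegree_of_ne_zero ?_)
    rw [hpcoeff q₀ hq₀mem]
    exact Finsupp.mem_support_iff.mp hq₀mem
  -- images of positive-degree polynomials with nonzero constant term are non-units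
  have hnonunit : ∀ w : K[X], w.coeff 0 ≠ 0 → 0 < w.natDegree → ¬ IsUnit (F w) := by
    intro w hw0 hwdeg hu
    obtain ⟨q, hq⟩ := support_singleton_of_isUnit hu
    have hw : w ≠ 0 := fun h => hw0 (by simp [h])
    have hmem : ∀ n : ℕ, w.coeff n ≠ 0 → g n ∈ (F w).coeff.support := by
      intro n hn
      rw [Finsupp.mem_support_iff, hFapp, Finsupp.mapDomain_apply hginj]
      exact hn
    have h0 : g 0 ∈ (F w).coeff.support := hmem 0 hw0
    have h1 : g w.natDegree ∈ (F w).coeff.support := by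
      refine hmem _ ?_
      rw [Polynomial.coeff_natDegree]
      exact Polynomial.leadingCoeff_ne_zero.mpr hw
    rw [hq, Finset.mem_singleton] at h0 h1
    rw [← h0] at h1
    exact absurd (hginj h1) (by omega)
  -- factor and conclude
  obtain ⟨u, v, huv, hu, hv⟩ := Hfac p hdeg3
  have hc : u.coeff 0 * v.coeff 0 ≠ 0 := by
    rw [← Polynomial.mul_coeff_zero, ← huv]; exact hp0
  have hu0 : u.coeff 0 ≠ 0 := fun h => hc (by rw [h, zero_mul])
  have hv0 : v.coeff 0 ≠ 0 := fun h => hc (by rw [h, mul_zero])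
  have hsplit : f' = F u * F v := by rw [← map_mul, ← huv, hFp]
  rcases hirr'.isUnit_or_isUnit hsplit with h | h
  · exact hnonunit u hu0 hu h
  · exact hnonunit v hv0 hv h


end Stmt19Aux

/-- The group algebras `AddMonoidAlgebra ℝ ℚ` and
`AddMonoidAlgebra ℂ ℚ` contain no irreducible (atomic) elements. -/
theorem stmt_19 :
    (∀ f : AddMonoidAlgebra ℝ ℚ, ¬ Irreducible f) ∧
    (∀ g : AddMonoidAlgebra ℂ ℚ, ¬ Irreducible g) := by
  exact ⟨Stmt19Aux.not_irreducible_aux Stmt19Aux.real_fac,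
    Stmt19Aux.not_irreducible_aux Stmt19Aux.complex_fac⟩
end
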